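/- arXiv:2512.15500 — 3 statements merged into one kernel-verified Lean document; each statement's English description precedes it below -/
import Mathlib

section
/- Let $\nu$ be a dislocation measure satisfying: there exist $c_\nu \in (0,\infty)$ and $\gamma \in [0,1)$ such that $\nu(s_1 \leq 1 - x) \sim c_\nu x^{-\gamma}$ as $x \downarrow 0$. Then for every integer $k \geq 2$, the function $f_k(x) = \nu(\sum_{i \geq 1} s_i^k \leq 1 - x)$ satisfies $f_k(x) \sim c_\nu (x/k)^{-\gamma}$ as $x \downarrow 0$. -/
set_option maxHeartbeats 1000000


open MeasureTheory Filter
open scoped ENNReal Topology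

private lemma aux_pow_bound (k : ℕ) : ∀ u : ℝ, 0 ≤ u → u ≤ 1 →
    (1-u)^k ≤ 1 - k*u + (k:ℝ)^2/2 * u^2 := by
  induction k with
  | zero => intro u h0 h1; norm_num
  | succ n ih =>
    intro u h0 h1
    have h3 := ih u h0 h1
    have h4 : 0 ≤ 1 - u := by linarith
    have h5 : (1-u)^n * (1-u) ≤ (1 - n*u + (n:ℝ)^2/2 * u^2) * (1-u) :=
      mul_le_mul_of_nonneg_right h3 h4
    have h2 : (1-u)^(n+1) = (1-u)^n * (1-u) := by ring
    rw [h2]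
    push_cast
    nlinarith [sq_nonneg u, mul_nonneg (mul_nonneg h0 h0) h0, sq_nonneg ((n:ℝ)*u)]

private lemma quad_lb (K x m : ℝ) (hK : 2 ≤ K) (hx0 : 0 < x) (hx1 : x * K^2 ≤ 1)
    (hm1 : x/K + x^2 ≤ m) (hm2 : m ≤ x) :
    K*m - (1 + K^2/2)*m^2 ≥ x := by
  have hKpos : (0:ℝ) < K := by linarith
  have h4 : x ≤ 1/4 := by nlinarith [mul_nonneg hx0.le (by nlinarith : (0:ℝ) ≤ K^2 - 4)]
  have hdiv : x/K ≤ x/2 := by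
    apply div_le_div_of_nonneg_left hx0.le (by norm_num) hK
  set u := x/K + x^2 with hu
  set C := 1 + K^2/2 with hC
  have hA : K*u - C*u^2 - x ≥ 0 := by
    have ht : K*x ≤ 1/2 := by nlinarith
    have ht0 : 0 ≤ K*x := by positivity
    have key : K^3 - C*(1+K*x)^2 ≥ 0 := by
      rw [hC]; nlinarith [sq_nonneg (K*x), sq_nonneg (K-2)]
    have h2 : K*u - C*u^2 - x = x^2 * (K^3 - C*(1+K*x)^2) / K^2 := by
      rw [hu]; field_simp; ring
    rw [h2]; positivity
  have hB : K*x - C*x^2 - x ≥ 0 := by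
    rw [hC]
    nlinarith [mul_le_mul_of_nonneg_left hx1 hx0.le, mul_nonneg hx0.le hx0.le]
  have hxu : 0 < x - u := by
    rw [hu]; nlinarith
  have hiden : (x-u)*((K*m - C*m^2) - x)
      = (x-m)*((K*u - C*u^2) - x) + (m-u)*((K*x - C*x^2) - x) + C*(m-u)*(x-m)*(x-u) := by
    ring
  have hge : (x-u)*((K*m - C*m^2) - x) ≥ 0 := by
    rw [hiden]
    have c1 : (0:ℝ) ≤ x - m := by linarith
    have c2 : (0:ℝ) ≤ m - u := by linarith
    have hCpos : (0:ℝ) ≤ C := by rw [hC]; positivity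
    have := mul_nonneg (mul_nonneg (mul_nonneg hCpos c2) c1) hxu.le
    nlinarith [mul_nonneg c1 hA, mul_nonneg c2 hB]
  nlinarith [hge, hxu]

private lemma claim_pt (k : ℕ) (hk : 2 ≤ k) (x w : ℝ) (hx0 : 0 < x) (hx1 : x * (k:ℝ)^2 ≤ 1)
    (hw1 : x/(k:ℝ) + x^2 ≤ w) (hw2 : w ≤ 1 - (x/(k:ℝ) + x^2)) :
    w^k + (1-w)^k ≤ 1 - x := by
  have hK : (2:ℝ) ≤ (k:ℝ) := by exact_mod_cast hk
  have hKpos : (0:ℝ) < (k:ℝ) := by linarith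
  have hupos : 0 < x/(k:ℝ) + x^2 := by positivity
  have key : ∀ m : ℝ, x/(k:ℝ) + x^2 ≤ m → m ≤ 1/2 → m^k + (1-m)^k ≤ 1 - x := by
    intro m hm1 hm2
    have hm0 : 0 ≤ m := le_trans hupos.le hm1
    have hm0' : 0 ≤ 1 - m := by linarith
    have hm1' : 1 - m ≤ 1 := by linarith
    have hmle1 : m ≤ 1 := by linarith
    have e1 : m^k ≤ m^2 := pow_le_pow_of_le_one hm0 hmle1 hk
    rcases le_or_gt x m with hxm | hxm
    · have e2 : (1-m)^k ≤ (1-m)^2 := pow_le_pow_of_le_one hm0' hm1' hk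
      nlinarith
    · have e2 : (1-m)^k ≤ 1 - (k:ℝ)*m + (k:ℝ)^2/2 * m^2 := aux_pow_bound k m hm0 hmle1
      have goal2 := quad_lb (k:ℝ) x m hK hx0 hx1 hm1 hxm.le
      nlinarith
  have hub : x/(k:ℝ) + x^2 ≤ 1/2 := by linarith
  rcases le_total w (1-w) with h | h
  · exact key w hw1 (by linarith)
  · have := key (1-w) (by linarith) (by linarith)
    have e : (1-(1-w)) = w := by ring
    rw [e] at this
    linarith

section PtLemmas
variable (s : ℕ → ℝ) (hnn : ∀ i, 0 ≤ s i) (hsum : ∑' i, s i = 1)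

include hsum in
private lemma summable_s : Summable s := by
  by_contra h
  rw [tsum_eq_zero_of_not_summable h] at hsum
  norm_num at hsum

include hnn hsum in
private lemma s_le_one (i : ℕ) : s i ≤ 1 := by
  have := Summable.le_tsum (summable_s s hsum) i (fun j _ => hnn j)
  linarith

include hnn hsum in
private lemma summable_pow (k : ℕ) (hk : 1 ≤ k) : Summable (fun i => s i ^ k) := by
  refine Summable.of_nonneg_of_le (fun i => pow_nonneg (hnn i) k)
    (fun i => pow_le_of_le_one (hnn i) (s_le_one s hnn hsum i) (by omega))
    (summable_s s hsum)

include hnn hsum in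
private lemma incl_upper (k : ℕ) (hk : 2 ≤ k) (x : ℝ) (hx1 : x < 1)
    (h : ∑' i, s i ^ k ≤ 1 - x) : s 0 ≤ (1-x) ^ ((k:ℝ)⁻¹) := by
  have hs0 : s 0 ^ k ≤ 1 - x := by
    have := Summable.le_tsum (summable_pow s hnn hsum k (by omega)) 0
      (fun j _ => pow_nonneg (hnn j) k)
    linarith
  by_contra h'
  push_neg at h'
  have ha : (0:ℝ) ≤ (1-x) ^ ((k:ℝ)⁻¹) := Real.rpow_nonneg (by linarith) _
  have hlt : ((1-x) ^ ((k:ℝ)⁻¹)) ^ k < s 0 ^ k :=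
    pow_lt_pow_left₀ h' ha (by omega)
  have heq : ((1-x) ^ ((k:ℝ)⁻¹)) ^ k = 1 - x := by
    rw [← Real.rpow_natCast ((1-x) ^ ((k:ℝ)⁻¹)) k, ← Real.rpow_mul (by linarith)]
    rw [inv_mul_cancel₀ (by positivity : ((k:ℝ)) ≠ 0), Real.rpow_one]
  rw [heq] at hlt
  linarith

include hnn hsum in
private lemma incl_lower (k : ℕ) (hk : 2 ≤ k) (hmono : Antitone s) :
    ∑' i, s i ^ k ≤ s 0 ^ k + (1 - s 0) ^ k := by
  obtain ⟨m, rfl⟩ : ∃ m, k = m + 1 := ⟨k - 1, by omega⟩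
  have hsummable := summable_s s hsum
  have hshift : Summable (fun i => s (i+1)) := by
    rw [summable_nat_add_iff]; exact hsummable
  have hshiftsum : ∑' i, s (i+1) = 1 - s 0 := by
    have := Summable.tsum_eq_zero_add hsummable
    rw [hsum] at this
    linarith
  have hs1 : ∀ i, s (i+1) ≤ 1 - s 0 := by
    intro i
    calc s (i+1) ≤ ∑' j, s (j+1) := Summable.le_tsum hshift i (fun j _ => hnn _)
    _ = 1 - s 0 := hshiftsum
  have hpow := summable_pow s hnn hsum (m+1) (by omega)
  have hpowshift : Summable (fun i => s (i+1) ^ (m+1)) :=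
    (summable_nat_add_iff (f := fun i => s i ^ (m+1)) 1).2 hpow
  have hsplit : ∑' i, s i ^ (m+1) = s 0 ^ (m+1) + ∑' i, s (i+1) ^ (m+1) :=
    Summable.tsum_eq_zero_add hpow
  have hterm : ∀ i, s (i+1) ^ (m+1) ≤ s (i+1) * (1 - s 0)^m := by
    intro i
    have h1 : s (i+1) ^ (m+1) = s (i+1) * s (i+1) ^ m := by ring
    rw [h1]
    exact mul_le_mul_of_nonneg_left (pow_le_pow_left₀ (hnn _) (hs1 i) m) (hnn _)
  have hbound : ∑' i, s (i+1) ^ (m+1) ≤ ∑' i, s (i+1) * (1 - s 0)^m := by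
    refine Summable.tsum_le_tsum hterm hpowshift ?_
    exact hshift.mul_right _
  have hbr : ∑' i, s (i+1) * (1 - s 0)^m = (1 - s 0) * (1 - s 0)^m := by
    rw [tsum_mul_right, hshiftsum]
  rw [hsplit]
  have : (1 - s 0) * (1 - s 0)^m = (1 - s 0)^(m+1) := by ring
  linarith [hbound, hbr.le, this.le]
end PtLemmas

private noncomputable def uu (K x : ℝ) : ℝ := x/K + x^2
private noncomputable def ypf (K x : ℝ) : ℝ := 1 - (1-x)^(K⁻¹)

private lemma ratio_helper (c γ K : ℝ) (F : ℝ → ℝ) (v : ℝ → ℝ)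
    (hKpos : 0 < K)
    (hv_pos : ∀ᶠ x in 𝓝[>](0:ℝ), 0 < v x)
    (h1 : Tendsto (fun x => F (v x) / (c * (v x)^(-γ))) (𝓝[>](0:ℝ)) (𝓝 1))
    (h2 : Tendsto (fun x => v x / (x/K)) (𝓝[>](0:ℝ)) (𝓝 1)) :
    Tendsto (fun x => F (v x) / (c * (x/K)^(-γ))) (𝓝[>](0:ℝ)) (𝓝 1) := by
  have h3 : Tendsto (fun x => (v x / (x/K)) ^ (-γ)) (𝓝[>](0:ℝ)) (𝓝 1) := by
    have := h2.rpow_const (p := -γ) (Or.inl one_ne_zero)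
    rwa [Real.one_rpow] at this
  have h4 := h1.mul h3
  rw [mul_one] at h4
  refine h4.congr' ?_
  filter_upwards [hv_pos, self_mem_nhdsWithin] with x hv hx
  have hx0 : (0:ℝ) < x := hx
  have hxK : 0 < x / K := by positivity
  rw [Real.div_rpow hv.le hxK.le]
  have hvp : 0 < (v x) ^ (-γ) := Real.rpow_pos_of_pos hv _
  have hxp : 0 < (x/K) ^ (-γ) := Real.rpow_pos_of_pos hxK _
  rw [div_mul_div_comm, mul_comm c (v x ^ (-γ)), mul_comm (F (v x)) (v x ^ (-γ)), mul_assoc, mul_div_mul_left _ _ hvp.ne']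

private lemma slope_limit (k : ℕ) (hk : 2 ≤ k) :
    Tendsto (fun x : ℝ => (1 - (1-x) ^ ((k:ℝ)⁻¹)) / (x / (k:ℝ))) (𝓝[>] (0:ℝ)) (𝓝 1) := by
  have hK : (2:ℝ) ≤ (k:ℝ) := by exact_mod_cast hk
  have hKpos : (0:ℝ) < (k:ℝ) := by linarith
  have hd : HasDerivAt (fun x : ℝ => (1-x) ^ ((k:ℝ)⁻¹)) (-(k:ℝ)⁻¹) 0 := by
    have h1 : HasDerivAt (fun x : ℝ => 1 - x) (-1) 0 := by
      simpa using (hasDerivAt_id' (0:ℝ)).const_sub 1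
    have h2 := h1.rpow_const (p := (k:ℝ)⁻¹) (by norm_num)
    simpa using h2
  have hslope := hasDerivAt_iff_tendsto_slope.mp hd
  have hmono : 𝓝[>] (0:ℝ) ≤ 𝓝[≠] (0:ℝ) :=
    nhdsWithin_mono 0 (fun x hx => ne_of_gt hx)
  have h3 : Tendsto (fun x : ℝ => ((1-x) ^ ((k:ℝ)⁻¹) - 1) / x) (𝓝[>] (0:ℝ)) (𝓝 (-(k:ℝ)⁻¹)) := by
    have := hslope.mono_left hmono
    refine this.congr (fun x => ?_)
    simp [slope_def_field, div_eq_inv_mul]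
  have h4 : Tendsto (fun x : ℝ => -(k:ℝ) * (((1-x) ^ ((k:ℝ)⁻¹) - 1) / x)) (𝓝[>] (0:ℝ))
      (𝓝 (-(k:ℝ) * -(k:ℝ)⁻¹)) := (tendsto_const_nhds).mul h3
  have he : -(k:ℝ) * -(k:ℝ)⁻¹ = 1 := by field_simp
  rw [he] at h4
  refine h4.congr' ?_
  filter_upwards [self_mem_nhdsWithin] with x hx
  have hx0 : x ≠ 0 := ne_of_gt hx
  field_simp
  ring

private lemma D_limit (ν : Measure (ℕ → ℝ)) (hzero : ν {s : ℕ → ℝ | s 0 ≤ 0} = 0)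
    (hfin : ∀ y : ℝ, 0 < y → ν {s : ℕ → ℝ | s 0 ≤ 1 - y} < ⊤) :
    Tendsto (fun δ : ℝ => (ν {s : ℕ → ℝ | s 0 < δ}).toReal) (𝓝[>] (0:ℝ)) (𝓝 0) := by
  set S : ℕ → Set (ℕ → ℝ) := fun n => {s : ℕ → ℝ | s 0 < 1/(n+2)} with hS
  have hmeasS : ∀ n, MeasurableSet (S n) := fun n =>
    measurableSet_lt (measurable_pi_apply 0) measurable_const
  have hanti : Antitone S := by
    intro a b hab s hs
    simp only [hS, Set.mem_setOf_eq] at hs ⊢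
    refine lt_of_lt_of_le hs ?_
    apply one_div_le_one_div_of_le (by positivity)
    have : (a:ℝ) ≤ (b:ℝ) := by exact_mod_cast hab
    linarith
  have hfin' : ∀ n, ν (S n) < ⊤ := by
    intro n
    refine lt_of_le_of_lt (measure_mono ?_) (hfin (1/2) (by norm_num))
    intro s hs
    simp only [hS, Set.mem_setOf_eq] at hs ⊢
    have h1 : (1:ℝ)/(n+2) ≤ 1/2 := by
      apply one_div_le_one_div_of_le (by norm_num)
      have : (0:ℝ) ≤ (n:ℝ) := Nat.cast_nonneg n
      linarith
    norm_num
    linarith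
  have hInter : (⋂ n, S n) = {s : ℕ → ℝ | s 0 ≤ 0} := by
    ext s
    simp only [Set.mem_iInter, hS, Set.mem_setOf_eq]
    constructor
    · intro h
      by_contra hpos
      push_neg at hpos
      obtain ⟨n, hn⟩ := exists_nat_one_div_lt hpos
      have := h n
      have h2 : (1:ℝ)/(n+2) ≤ 1/(n+1) := by
        apply one_div_le_one_div_of_le (by positivity)
        linarith
      linarith
    · intro h n
      have : (0:ℝ) < 1/(n+2) := by positivity
      linarith
  have hlim : Tendsto (fun n => ν (S n)) atTop (𝓝 0) := by
    have := tendsto_measure_iInter_atTop (fun n => (hmeasS n).nullMeasurableSet) hanti ⟨0, (hfin' 0).ne⟩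
    rwa [hInter, hzero] at this
  have hlimR : Tendsto (fun n => (ν (S n)).toReal) atTop (𝓝 0) := by
    have := (ENNReal.tendsto_toReal (by simp)).comp hlim
    simpa [Function.comp_def] using this
  rw [NormedAddCommGroup.tendsto_nhds_zero]
  intro ε hε
  obtain ⟨n, hn⟩ := (hlimR.eventually_lt_const hε).exists
  have hmem : Set.Ioo (0:ℝ) (1/(n+2)) ∈ 𝓝[>] (0:ℝ) :=
    Ioo_mem_nhdsGT_of_mem ⟨le_refl 0, by positivity⟩
  filter_upwards [hmem] with δ hδ
  rw [Real.norm_eq_abs, abs_of_nonneg ENNReal.toReal_nonneg]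
  refine lt_of_le_of_lt ?_ hn
  have hsub : {s : ℕ → ℝ | s 0 < δ} ⊆ S n := fun s hs => lt_of_lt_of_le hs hδ.2.le
  exact ENNReal.toReal_mono (hfin' n).ne (measure_mono hsub)

private lemma markov_fin (ν : Measure (ℕ → ℝ)) (h_int : ∫⁻ s, ENNReal.ofReal (1 - s 0) ∂ν < ⊤)
    (y : ℝ) (hy : 0 < y) : ν {s | s 0 ≤ 1 - y} < ⊤ := by
  have hmeas : AEMeasurable (fun s : ℕ → ℝ => ENNReal.ofReal (1 - s 0)) ν :=
    (ENNReal.measurable_ofReal.comp ((measurable_const.sub (measurable_pi_apply 0)))).aemeasurable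
  have hsub : {s : ℕ → ℝ | s 0 ≤ 1 - y} ⊆ {s : ℕ → ℝ | ENNReal.ofReal y ≤ ENNReal.ofReal (1 - s 0)} := by
    intro s hs
    exact ENNReal.ofReal_le_ofReal (by simpa using by linarith [hs.out])
  have := mul_meas_ge_le_lintegral₀ hmeas (ENNReal.ofReal y)
  have h1 : ν {s : ℕ → ℝ | ENNReal.ofReal y ≤ ENNReal.ofReal (1 - s 0)} < ⊤ := by
    by_contra h
    push_neg at h
    rw [top_le_iff] at h
    rw [h, ENNReal.mul_top (by simpa using hy)] at this
    exact absurd (this.trans_lt h_int) (lt_irrefl _)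
  exact lt_of_le_of_lt (measure_mono hsub) h1

/-- If a dislocation measure `ν` satisfies `ν(s₁ ≤ 1 - x) ~ c x^{-γ}` as `x ↓ 0`
(assumption (H_γ)), then for every integer `k ≥ 2` the function
`f_k(x) = ν(∑_i s_i^k ≤ 1 - x)` satisfies `f_k(x) ~ c (x/k)^{-γ}` as `x ↓ 0`. -/
theorem stmt_1 (ν : Measure (ℕ → ℝ)) (c γ : ℝ) (hc : 0 < c) (hγ0 : 0 ≤ γ) (hγ1 : γ < 1)
    (h_mono : ∀ᵐ s ∂ν, Antitone s)
    (h_nonneg : ∀ᵐ s ∂ν, ∀ i, 0 ≤ s i)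
    (h_mass : ∀ᵐ s ∂ν, ∑' i, s i = 1)
    (h_triv : ν {s | s = fun i => if i = 0 then (1 : ℝ) else 0} = 0)
    (h_int : ∫⁻ s, ENNReal.ofReal (1 - s 0) ∂ν < ⊤)
    (hH : Tendsto (fun x : ℝ => (ν {s | s 0 ≤ 1 - x}).toReal / (c * x ^ (-γ)))
      (𝓝[>] 0) (𝓝 1)) :
    ∀ k : ℕ, 2 ≤ k →
      Tendsto (fun x : ℝ =>
          (ν {s | ∑' i, (s i) ^ k ≤ 1 - x}).toReal / (c * (x / k) ^ (-γ)))
        (𝓝[>] 0) (𝓝 1) := by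
  intro k hk
  have hK : (2:ℝ) ≤ (k:ℝ) := by exact_mod_cast hk
  have hKpos : (0:ℝ) < (k:ℝ) := by linarith
  set K := (k:ℝ) with hKdef
  -- finiteness
  have hfin : ∀ y : ℝ, 0 < y → ν {s : ℕ → ℝ | s 0 ≤ 1 - y} < ⊤ := markov_fin ν h_int
  -- a.e. positivity of s 0
  have hae_pos : ∀ᵐ s ∂ν, 0 < s 0 := by
    filter_upwards [h_mono, h_nonneg, h_mass] with s h1 h2 h3
    by_contra h0
    push_neg at h0
    have hz : ∀ i, s i = 0 := fun i => le_antisymm (le_trans (h1 (Nat.zero_le i)) h0) (h2 i)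
    have : (∑' i, s i) = 0 := by
      rw [tsum_congr hz]; exact tsum_zero
    rw [h3] at this
    norm_num at this
  have hzero : ν {s : ℕ → ℝ | s 0 ≤ 0} = 0 := by
    have := ae_iff.mp hae_pos
    convert this using 2
    ext s
    simp [not_lt]
  -- the auxiliary functions
  have hudef : uu K = fun x => x/K + x^2 := rfl
  have hypdef : ypf K = fun x => 1 - (1-x) ^ (K⁻¹) := rfl
  -- tendsto of u and yp into 𝓝[>] 0
  have hu_tendsto : Tendsto (uu K) (𝓝[>](0:ℝ)) (𝓝[>] (0:ℝ)) := by
    apply tendsto_nhdsWithin_of_tendsto_nhds_of_eventually_within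
    · have hcont : Continuous (uu K) := by
        show Continuous (fun x : ℝ => x/K + x^2); continuity
      have := hcont.tendsto 0
      rw [show uu K 0 = 0 by simp [uu]] at this
      exact this.mono_left nhdsWithin_le_nhds
    · filter_upwards [self_mem_nhdsWithin] with x hx
      have : (0:ℝ) < x := hx
      show 0 < uu K x
      simp only [uu]; positivity
  have hyp_tendsto : Tendsto (ypf K) (𝓝[>](0:ℝ)) (𝓝[>] (0:ℝ)) := by
    apply tendsto_nhdsWithin_of_tendsto_nhds_of_eventually_within
    · have hcont : Continuous (ypf K) := by
        show Continuous (fun x : ℝ => 1 - (1-x) ^ (K⁻¹))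
        exact continuous_const.sub
          ((continuous_const.sub continuous_id).rpow_const (fun x => Or.inr (by positivity)))
      have := hcont.tendsto 0
      rw [show ypf K 0 = 0 by simp [ypf]] at this
      exact this.mono_left nhdsWithin_le_nhds
    · filter_upwards [Ioo_mem_nhdsGT_of_mem (Set.mem_Ico.mpr ⟨le_refl 0, one_pos⟩)] with x hx
      show 0 < ypf K x
      have h1 : (1-x) ^ (K⁻¹) < 1 :=
        Real.rpow_lt_one (by linarith [hx.2]) (by linarith [hx.1]) (by positivity)
      simp only [ypf]; simpa using h1
  -- ratio limits
  have hq_u : Tendsto (fun x => uu K x / (x/K)) (𝓝[>](0:ℝ)) (𝓝 1) := by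
    have h1 : Tendsto (fun x : ℝ => 1 + K*x) (𝓝[>](0:ℝ)) (𝓝 1) := by
      have : Tendsto (fun x : ℝ => 1 + K*x) (𝓝 (0:ℝ)) (𝓝 (1 + K*0)) := by
        apply Continuous.tendsto; continuity
      rw [show 1 + K*0 = 1 by ring] at this
      exact this.mono_left nhdsWithin_le_nhds
    refine h1.congr' ?_
    filter_upwards [self_mem_nhdsWithin] with x hx
    have hx0 : x ≠ 0 := ne_of_gt hx
    have hK0 : K ≠ 0 := ne_of_gt hKpos
    simp only [uu]
    field_simp
  have hq_yp : Tendsto (fun x => ypf K x / (x/K)) (𝓝[>](0:ℝ)) (𝓝 1) := by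
    simp only [hypdef, hKdef]
    exact slope_limit k hk
  -- composed H limits
  have hFu : Tendsto (fun x => (ν {s : ℕ → ℝ | s 0 ≤ 1 - uu K x}).toReal / (c * (uu K x)^(-γ)))
      (𝓝[>](0:ℝ)) (𝓝 1) := hH.comp hu_tendsto
  have hFyp : Tendsto (fun x => (ν {s : ℕ → ℝ | s 0 ≤ 1 - ypf K x}).toReal / (c * (ypf K x)^(-γ)))
      (𝓝[>](0:ℝ)) (𝓝 1) := hH.comp hyp_tendsto
  have hupos_ev : ∀ᶠ x in 𝓝[>](0:ℝ), 0 < uu K x :=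
    hu_tendsto.eventually self_mem_nhdsWithin
  have hyppos_ev : ∀ᶠ x in 𝓝[>](0:ℝ), 0 < ypf K x :=
    hyp_tendsto.eventually self_mem_nhdsWithin
  have hRu := ratio_helper c γ K (fun y => (ν {s : ℕ → ℝ | s 0 ≤ 1 - y}).toReal) (uu K) hKpos
    hupos_ev hFu hq_u
  have hRyp := ratio_helper c γ K (fun y => (ν {s : ℕ → ℝ | s 0 ≤ 1 - y}).toReal) (ypf K) hKpos
    hyppos_ev hFyp hq_yp
  -- D limit
  have hD0 : Tendsto (fun x => (ν {s : ℕ → ℝ | s 0 < uu K x}).toReal) (𝓝[>](0:ℝ)) (𝓝 0) :=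
    (D_limit ν hzero hfin).comp hu_tendsto
  have hDr : Tendsto (fun x => (ν {s : ℕ → ℝ | s 0 < uu K x}).toReal / (c * (x/K)^(-γ)))
      (𝓝[>](0:ℝ)) (𝓝 0) := by
    have hup : Tendsto (fun x => (ν {s : ℕ → ℝ | s 0 < uu K x}).toReal / c) (𝓝[>](0:ℝ)) (𝓝 0) := by
      have := hD0.div_const c
      simpa using this
    apply tendsto_of_tendsto_of_tendsto_of_le_of_le' tendsto_const_nhds hup
    · filter_upwards [self_mem_nhdsWithin] with x hx
      have : (0:ℝ) < x := hx
      positivity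
    · filter_upwards [Ioo_mem_nhdsGT_of_mem (Set.mem_Ico.mpr ⟨le_refl 0, hKpos⟩)] with x hx
      have hx0 : 0 < x := hx.1
      have hxK : 0 < x/K := by positivity
      have hxK1 : x/K ≤ 1 := by
        rw [div_le_one hKpos]; linarith [hx.2]
      have h1 : (1:ℝ) ≤ (x/K) ^ (-γ) :=
        Real.one_le_rpow_of_pos_of_le_one_of_nonpos hxK hxK1 (by linarith)
      have h2 : c ≤ c * (x/K)^(-γ) := by nlinarith
      exact div_le_div_of_nonneg_left ENNReal.toReal_nonneg hc h2
  -- the squeeze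
  set eps : ℝ := 1/K^2 with heps
  have hepspos : 0 < eps := by rw [heps]; positivity
  have hcond : ∀ᶠ x in 𝓝[>](0:ℝ), 0 < x ∧ x * K^2 ≤ 1 ∧ x < 1 ∧ uu K x ≤ 1/2 ∧ 0 < uu K x ∧ 0 < ypf K x := by
    filter_upwards [Ioo_mem_nhdsGT_of_mem (Set.mem_Ico.mpr ⟨le_refl 0, hepspos⟩), hyppos_ev]
      with x hx hyp
    have hx0 : 0 < x := hx.1
    have hx1 : x * K^2 ≤ 1 := by
      have h2 : x < 1/K^2 := hx.2
      have hK2 : (0:ℝ) < K^2 := by positivity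
      calc x * K^2 ≤ (1/K^2) * K^2 := by nlinarith
      _ = 1 := by field_simp
    have hx4 : x ≤ 1/4 := by nlinarith [mul_nonneg hx0.le (by nlinarith : (0:ℝ) ≤ K^2 - 4)]
    have hxlt1 : x < 1 := by linarith
    have hu2 : uu K x ≤ 1/2 := by
      have hdiv : x/K ≤ x/2 := div_le_div_of_nonneg_left hx0.le (by norm_num) hK
      simp only [uu]
      nlinarith
    have hu0 : 0 < uu K x := by simp only [uu]; have := hKpos; positivity
    exact ⟨hx0, hx1, hxlt1, hu2, hu0, hyp⟩
  -- upper bound: G x ≤ F (ypf K x)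
  have hub : ∀ᶠ x in 𝓝[>](0:ℝ),
      (ν {s : ℕ → ℝ | ∑' i, (s i)^k ≤ 1 - x}).toReal
        ≤ (ν {s : ℕ → ℝ | s 0 ≤ 1 - ypf K x}).toReal := by
    filter_upwards [hcond] with x ⟨hx0, hx1, hxlt1, hu2, hu0, hyp0⟩
    have hincl : ν {s : ℕ → ℝ | ∑' i, (s i)^k ≤ 1 - x} ≤ ν {s : ℕ → ℝ | s 0 ≤ 1 - ypf K x} := by
      apply measure_mono_ae
      filter_upwards [h_nonneg, h_mass] with s h2 h3
      intro hs
      show s 0 ≤ 1 - ypf K x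
      have := incl_upper s h2 h3 k hk x hxlt1 hs
      simp only [ypf]
      simpa using this
    exact ENNReal.toReal_mono (hfin (ypf K x) hyp0).ne hincl
  -- lower bound
  have hlb : ∀ᶠ x in 𝓝[>](0:ℝ),
      (ν {s : ℕ → ℝ | s 0 ≤ 1 - uu K x}).toReal - (ν {s : ℕ → ℝ | s 0 < uu K x}).toReal
        ≤ (ν {s : ℕ → ℝ | ∑' i, (s i)^k ≤ 1 - x}).toReal := by
    filter_upwards [hcond] with x ⟨hx0, hx1, hxlt1, hu2, hu0, hyp0⟩
    set A : Set (ℕ → ℝ) := {s : ℕ → ℝ | s 0 ≤ 1 - uu K x} with hA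
    set B : Set (ℕ → ℝ) := {s : ℕ → ℝ | s 0 < uu K x} with hB
    have hBA : B ⊆ A := by
      intro s hs
      simp only [hB, Set.mem_setOf_eq] at hs
      simp only [hA, Set.mem_setOf_eq]
      linarith
    have hBmeas : NullMeasurableSet B ν :=
      (measurableSet_lt (measurable_pi_apply 0) measurable_const).nullMeasurableSet
    have hAfin : ν A < ⊤ := hfin (uu K x) hu0
    have hBfin : ν B < ⊤ := lt_of_le_of_lt (measure_mono hBA) hAfin
    have hdiff : ν (A \ B) = ν A - ν B := measure_diff hBA hBmeas hBfin.ne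
    have hinclG : ν (A \ B) ≤ ν {s : ℕ → ℝ | ∑' i, (s i)^k ≤ 1 - x} := by
      apply measure_mono_ae
      filter_upwards [h_mono, h_nonneg, h_mass] with s h1 h2 h3
      intro hs
      obtain ⟨hsA, hsB⟩ := hs
      simp only [hA, Set.mem_setOf_eq] at hsA
      simp only [hB, Set.mem_setOf_eq] at hsB
      push_neg at hsB
      show ∑' i, (s i)^k ≤ 1 - x
      have hchain := incl_lower s h2 h3 k hk h1
      have hcp := claim_pt k hk x (s 0) hx0 (by rw [hKdef] at hx1; exact hx1)
        (by rw [hKdef] at hsB; exact hsB) (by rw [hKdef] at hsA; exact hsA)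
      linarith
    have hGfin : ν {s : ℕ → ℝ | ∑' i, (s i)^k ≤ 1 - x} < ⊤ := by
      refine lt_of_le_of_lt ?_ (hfin (ypf K x) hyp0)
      apply measure_mono_ae
      filter_upwards [h_nonneg, h_mass] with s h2 h3
      intro hs
      show s 0 ≤ 1 - ypf K x
      have := incl_upper s h2 h3 k hk x hxlt1 hs
      simp only [ypf]; simpa using this
    have h5 : (ν (A \ B)).toReal ≤ (ν {s : ℕ → ℝ | ∑' i, (s i)^k ≤ 1 - x}).toReal :=
      ENNReal.toReal_mono hGfin.ne hinclG
    have h6 : (ν (A \ B)).toReal = (ν A).toReal - (ν B).toReal := by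
      rw [hdiff, ENNReal.toReal_sub_of_le (measure_mono hBA) hAfin.ne]
    linarith
  -- conclude
  have h_low : Tendsto (fun x => (ν {s : ℕ → ℝ | s 0 ≤ 1 - uu K x}).toReal / (c * (x/K)^(-γ))
      - (ν {s : ℕ → ℝ | s 0 < uu K x}).toReal / (c * (x/K)^(-γ))) (𝓝[>](0:ℝ)) (𝓝 1) := by
    have := hRu.sub hDr
    simpa using this
  refine tendsto_of_tendsto_of_tendsto_of_le_of_le' h_low hRyp ?_ ?_
  · filter_upwards [hlb, self_mem_nhdsWithin] with x hx hxpos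
    have hx0 : (0:ℝ) < x := hxpos
    have hr : 0 < c * (x/K)^(-γ) := by
      have : 0 < (x/K)^(-γ) := Real.rpow_pos_of_pos (by positivity) _
      positivity
    rw [← sub_div]
    exact (div_le_div_iff_of_pos_right hr).2 hx
  · filter_upwards [hub, self_mem_nhdsWithin] with x hx hxpos
    have hx0 : (0:ℝ) < x := hxpos
    have hr : 0 < c * (x/K)^(-γ) := by
      have : 0 < (x/K)^(-γ) := Real.rpow_pos_of_pos (by positivity) _
      positivity
    exact (div_le_div_iff_of_pos_right hr).2 hx
end

section
/- Let $\nu$ be a dislocation measure and $\eta \in (0,1)$. If $\int_{\mathcal S} \sum_{i \geq 2} s_i^{1-\eta}\, \nu(\mathrm d\mathbf s) < \infty$, then $\int_0^\infty (e^{\eta x} - 1)\, \Xi(\mathrm dx) < \infty$, where $\Xi(\mathrm dx) = \sum_{i \geq 1} e^{-x}\, \nu(-\log(s_i) \in \mathrm dx)$ is the Lévy measure of the tagged-fragment subordinator. Consequently, $\phi$ admits an analytic continuation on $(-\eta', \infty)$ for some $\eta' > 0$, and conversely. -/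
open MeasureTheory Filter Set
open scoped ENNReal NNReal Topology

lemma lint_sum_map (ν : Measure (ℕ → ℝ)) (f : ℝ → ℝ≥0∞) (hf : Measurable f) :
    ∫⁻ x in Ioi (0:ℝ), f x ∂(Measure.sum (fun i : ℕ =>
      Measure.map (fun s : ℕ → ℝ => -Real.log (s i))
        (ν.withDensity (fun s => ENNReal.ofReal (s i)))))
    = ∫⁻ s, ∑' i, ENNReal.ofReal (s i) * (Ioi (0:ℝ)).indicator f (-Real.log (s i)) ∂ν := by
  rw [← lintegral_indicator measurableSet_Ioi, lintegral_sum_measure]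
  have h1 : ∀ i : ℕ, (∫⁻ a, (Ioi (0:ℝ)).indicator f a
      ∂(Measure.map (fun s : ℕ → ℝ => -Real.log (s i))
        (ν.withDensity (fun s => ENNReal.ofReal (s i)))))
      = ∫⁻ s, ENNReal.ofReal (s i) * (Ioi (0:ℝ)).indicator f (-Real.log (s i)) ∂ν := by
    intro i
    have hg : Measurable fun s : ℕ → ℝ => -Real.log (s i) :=
      ((measurable_pi_apply i).log).neg
    have hd : Measurable fun s : ℕ → ℝ => ENNReal.ofReal (s i) :=
      (measurable_pi_apply i).ennreal_ofReal
    have h2 : Measurable fun s : ℕ → ℝ => (Ioi (0:ℝ)).indicator f (-Real.log (s i)) :=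
      (hf.indicator measurableSet_Ioi).comp hg
    rw [lintegral_map (hf.indicator measurableSet_Ioi) hg,
      lintegral_withDensity_eq_lintegral_mul _ hd h2]
    rfl
  rw [tsum_congr h1, ← lintegral_tsum]
  intro i
  have hg : Measurable fun s : ℕ → ℝ => -Real.log (s i) :=
    ((measurable_pi_apply i).log).neg
  have hd : Measurable fun s : ℕ → ℝ => ENNReal.ofReal (s i) :=
    (measurable_pi_apply i).ennreal_ofReal
  exact (hd.mul ((hf.indicator measurableSet_Ioi).comp hg)).aemeasurable

-- generic evaluation: for t ∈ [0,1] and g : ℝ → ℝ with suitable matching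
lemma eval_eta {η : ℝ} (hη0 : 0 < η) (hη1 : η < 1) {t : ℝ} (h0 : 0 ≤ t) (h1 : t ≤ 1) :
    ENNReal.ofReal t * (Ioi (0:ℝ)).indicator
        (fun x => ENNReal.ofReal (Real.exp (η * x) - 1)) (-Real.log t)
    = ENNReal.ofReal (t ^ (1 - η) - t) := by
  rcases eq_or_lt_of_le h0 with h0' | h0'
  · rw [← h0']
    rw [Real.zero_rpow (ne_of_gt (by linarith : (0:ℝ) < 1 - η))]
    · simp
  rcases eq_or_lt_of_le h1 with h1' | h1'
  · subst h1'
    rw [Real.log_one, neg_zero, indicator_of_notMem (by simp : (0:ℝ) ∉ Ioi (0:ℝ))]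
    simp
  · have hlog : 0 < -Real.log t := by
      have := Real.log_neg h0' h1'
      linarith
    rw [Set.indicator_of_mem (Set.mem_Ioi.mpr hlog)]
    rw [← ENNReal.ofReal_mul h0]
    congr 1
    have hexp : Real.exp (η * -Real.log t) = t ^ (-η) := by
      rw [Real.rpow_def_of_pos h0']
      ring_nf
    rw [hexp, Real.rpow_neg h0, Real.rpow_sub h0', Real.rpow_one]
    ring

lemma eval_q {q : ℝ} (hq : 0 ≤ q) {t : ℝ} (h0 : 0 ≤ t) (h1 : t ≤ 1) :
    ENNReal.ofReal t * (Ioi (0:ℝ)).indicator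
        (fun x => ENNReal.ofReal (1 - Real.exp (-(q * x)))) (-Real.log t)
    = ENNReal.ofReal (t - t ^ (q + 1)) := by
  rcases eq_or_lt_of_le h0 with h0' | h0'
  · rw [← h0']
    rw [Real.zero_rpow (ne_of_gt (by linarith : (0:ℝ) < q + 1))]
    simp
  rcases eq_or_lt_of_le h1 with h1' | h1'
  · subst h1'
    rw [Real.log_one, neg_zero, indicator_of_notMem (by simp : (0:ℝ) ∉ Ioi (0:ℝ))]
    simp [Real.one_rpow]
  · have hlog : 0 < -Real.log t := by
      have := Real.log_neg h0' h1'
      linarith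
    rw [Set.indicator_of_mem (Set.mem_Ioi.mpr hlog)]
    rw [← ENNReal.ofReal_mul h0]
    congr 1
    have hexp : Real.exp (-(q * -Real.log t)) = t ^ q := by
      rw [Real.rpow_def_of_pos h0']
      ring_nf
    rw [hexp]
    have h2 : t ^ (q + 1) = t ^ q * t ^ (1:ℝ) := Real.rpow_add h0' q 1
    rw [h2, Real.rpow_one]
    ring

lemma laplace_expansion (μ : Measure ℝ) (hx : ∀ᵐ x ∂μ, 0 < x) {a ρ : ℝ} (hρ : 0 < ρ)
    (Hdom : ∫⁻ x, ENNReal.ofReal ((Real.exp (ρ * x) - 1) * Real.exp (-(a * x))) ∂μ ≠ ∞)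
    (Hbase : Integrable (fun x => 1 - Real.exp (-(a * x))) μ) :
    HasFPowerSeriesOnBall (fun q => ∫ x, (1 - Real.exp (-(q * x))) ∂μ)
      (FormalMultilinearSeries.ofScalars ℝ (fun n =>
        if n = 0 then ∫ x, (1 - Real.exp (-(a * x))) ∂μ
        else (-1) ^ (n + 1) / n.factorial * ∫ x, x ^ n * Real.exp (-(a * x)) ∂μ))
      a (ENNReal.ofReal ρ) := by
  set c : ℕ → ℝ := fun n =>
    if n = 0 then ∫ x, (1 - Real.exp (-(a * x))) ∂μ
    else (-1) ^ (n + 1) / n.factorial * ∫ x, x ^ n * Real.exp (-(a * x)) ∂μ with hc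
  set m : ℕ → ℝ → ℝ := fun n x =>
    if n = 0 then 1 - Real.exp (-(a * x))
    else (-1) ^ (n + 1) * (x ^ n / n.factorial) * Real.exp (-(a * x)) with hm
  -- measurability
  have meas : ∀ n, AEStronglyMeasurable (m n) μ := by
    intro n
    by_cases h : n = 0 <;> simp only [hm, h, if_true, if_false, reduceIte] <;>
      exact (by fun_prop : Continuous _).aestronglyMeasurable
  have measy : ∀ (n : ℕ) (y : ℝ), AEStronglyMeasurable (fun x => m n x * y ^ n) μ :=
    fun n y => (meas n).mul_const _
  -- pointwise HasSum of the expansion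
  have ptHasSum : ∀ (y x : ℝ), HasSum (fun n => m n x * y ^ n)
      (1 - Real.exp (-((a + y) * x))) := by
    intro y x
    have h0 := (NormedSpace.expSeries_div_hasSum_exp (-(y * x))).mul_right
      (-(Real.exp (-(a * x))))
    rw [← Real.exp_eq_exp_ℝ] at h0
    have h1 := h0.update 0 (1 - Real.exp (-(a * x)))
    have he : Function.update (fun n : ℕ => (-(y * x)) ^ n / n.factorial *
        -(Real.exp (-(a * x)))) 0 (1 - Real.exp (-(a * x)))
        = fun n => m n x * y ^ n := by
      funext n
      rcases n with _ | n
      · simp [hm]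
      · rw [Function.update_of_ne (Nat.succ_ne_zero n)]
        simp only [hm, if_false, reduceIte, Nat.succ_ne_zero, Nat.succ_eq_add_one]
        rw [neg_pow (y * x), mul_pow, pow_succ (-1 : ℝ) (n + 1)]
        push_cast
        ring
    rw [he] at h1
    convert h1 using 1
    rfl
    have : Real.exp (-(y * x)) * Real.exp (-(a * x)) = Real.exp (-((a + y) * x)) := by
      rw [← Real.exp_add]; ring_nf
    simp only [pow_zero, Nat.factorial_zero, Nat.cast_one, div_one, one_mul]
    nlinarith [this]
  -- the key lintegral bound for the tail
  have key : ∀ y : ℝ, |y| ≤ ρ →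
      (∑' n, ∫⁻ x, ‖m (n + 1) x * y ^ (n + 1)‖₊ ∂μ)
        ≤ ∫⁻ x, ENNReal.ofReal ((Real.exp (ρ * x) - 1) * Real.exp (-(a * x))) ∂μ := by
    intro y hy
    rw [← lintegral_tsum (fun n => (measy (n+1) y).aemeasurable.nnnorm.coe_nnreal_ennreal)]
    refine lintegral_mono_ae ?_
    filter_upwards [hx] with x hx0
    have habs : ∀ n : ℕ, ((‖m (n + 1) x * y ^ (n + 1)‖₊ : ℝ≥0∞))
        = ENNReal.ofReal ((|y| * x) ^ (n + 1) / (n + 1).factorial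
            * Real.exp (-(a * x))) := by
      intro n
      rw [← enorm_eq_nnnorm, ← ofReal_norm]
      congr 1
      rw [Real.norm_eq_abs, abs_mul, abs_pow]
      simp only [hm, Nat.succ_ne_zero, if_false, reduceIte]
      rw [abs_mul, abs_mul, abs_pow, abs_neg, abs_one, one_pow, one_mul,
        abs_div, abs_pow, abs_of_pos hx0, Real.abs_exp,
        abs_of_nonneg (by positivity : (0:ℝ) ≤ ((n+1).factorial : ℝ)), mul_pow]
      ring
    have hsum1 : HasSum (fun n => (|y| * x) ^ (n + 1) / (n + 1).factorial
        * Real.exp (-(a * x))) ((Real.exp (|y| * x) - 1) * Real.exp (-(a * x))) := by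
      have h0 := ((NormedSpace.expSeries_div_hasSum_exp (|y| * x)).mul_right
        (Real.exp (-(a * x))))
      rw [← Real.exp_eq_exp_ℝ] at h0
      have h1 := (hasSum_nat_add_iff' 1).2 h0
      simp only [Finset.range_one, Finset.sum_singleton, pow_zero, Nat.factorial_zero,
        Nat.cast_one, div_one, one_mul] at h1
      convert h1 using 1
      rfl
      ring
    calc ∑' n, ((‖m (n + 1) x * y ^ (n + 1)‖₊ : ℝ≥0∞))
        = ENNReal.ofReal ((Real.exp (|y| * x) - 1) * Real.exp (-(a * x))) := by
          rw [tsum_congr habs, ← ENNReal.ofReal_tsum_of_nonneg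
            (fun n => by positivity) hsum1.summable, hsum1.tsum_eq]
      _ ≤ ENNReal.ofReal ((Real.exp (ρ * x) - 1) * Real.exp (-(a * x))) := by
          apply ENNReal.ofReal_le_ofReal
          have : Real.exp (|y| * x) ≤ Real.exp (ρ * x) :=
            Real.exp_le_exp.mpr (by nlinarith)
          nlinarith [Real.exp_pos (-(a * x))]
  -- total nnnorm sum is finite
  have sumInt : ∀ y : ℝ, |y| ≤ ρ →
      (∑' n, ∫⁻ x, ‖m n x * y ^ n‖₊ ∂μ) ≠ ∞ := by
    intro y hy
    rw [tsum_eq_zero_add' ENNReal.summable]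
    have h0 : (∫⁻ x, ‖m 0 x * y ^ 0‖₊ ∂μ) < ∞ := by
      simp only [pow_zero, mul_one, hm, reduceIte]
      exact Hbase.2
    exact ENNReal.add_ne_top.mpr ⟨h0.ne, ((key y hy).trans_lt (Hdom.lt_top)).ne⟩
  -- integrability of each term
  have integ : ∀ (n : ℕ) (y : ℝ), |y| ≤ ρ → Integrable (fun x => m n x * y ^ n) μ := by
    intro n y hy
    refine ⟨measy n y, ?_⟩
    have := ENNReal.le_tsum (f := fun n => ∫⁻ x, ‖m n x * y ^ n‖₊ ∂μ) n
    exact lt_of_le_of_lt (this.trans_eq rfl) (lt_of_le_of_ne le_top (sumInt y hy))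
  -- each Bochner integral equals c n * y ^ n
  have cInt : ∀ (n : ℕ) (y : ℝ), (∫ x, m n x * y ^ n ∂μ) = c n * y ^ n := by
    intro n y
    rcases n with _ | n
    · simp [hm, hc]
    · rw [integral_mul_const]
      congr 1
      simp only [hm, hc, Nat.succ_ne_zero, if_false, reduceIte, Nat.succ_eq_add_one]
      rw [← integral_const_mul]
      congr 1
      funext x
      ring
  -- summability of the integrals, with norm bound
  have normInt : ∀ (n : ℕ) (y : ℝ), ‖∫ x, m n x * y ^ n ∂μ‖
      ≤ (∫⁻ x, ‖m n x * y ^ n‖₊ ∂μ).toReal := by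
    intro n y
    refine (norm_integral_le_lintegral_norm _).trans_eq ?_
    congr 1
    exact lintegral_congr fun x => (ofReal_norm _)
  have sumc : ∀ y : ℝ, |y| ≤ ρ → Summable (fun n => ∫ x, m n x * y ^ n ∂μ) := by
    intro y hy
    exact Summable.of_norm_bounded (ENNReal.summable_toReal (sumInt y hy)) (normInt · y)
  constructor
  · -- radius bound
    have : ENNReal.ofReal ρ = ((ρ.toNNReal : ℝ≥0) : ℝ≥0∞) := rfl
    rw [this]
    apply FormalMultilinearSeries.le_radius_of_summable_norm
    have hcoe : ((ρ.toNNReal : ℝ≥0) : ℝ) = ρ := Real.coe_toNNReal _ hρ.le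
    simp only [FormalMultilinearSeries.ofScalars_norm, hcoe]
    have heq : ∀ n : ℕ, ‖c n‖ * ρ ^ n = ‖∫ x, m n x * ρ ^ n ∂μ‖ := by
      intro n
      rw [cInt n ρ, norm_mul, norm_pow, Real.norm_eq_abs, Real.norm_eq_abs,
        abs_of_pos hρ]
    rw [funext heq]
    exact Summable.of_nonneg_of_le (fun n => norm_nonneg _) (fun n => normInt n ρ)
      (ENNReal.summable_toReal (sumInt ρ (le_of_eq (abs_of_pos hρ))))
  · exact ENNReal.ofReal_pos.mpr hρ
  · -- HasSum
    intro y hy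
    have hy' : |y| < ρ := by
      rw [mem_emetric_ball_zero_iff, ← ofReal_norm, Real.norm_eq_abs] at hy
      exact (ENNReal.ofReal_lt_ofReal_iff hρ).mp hy
    simp only [FormalMultilinearSeries.ofScalars_apply_eq, smul_eq_mul]
    have hint : ∫ x, (1 - Real.exp (-((a + y) * x))) ∂μ = ∑' n, ∫ x, m n x * y ^ n ∂μ := by
      rw [← integral_tsum (fun n => measy n y) (sumInt y hy'.le)]
      exact integral_congr_ae (Eventually.of_forall fun x => ((ptHasSum y x).tsum_eq).symm)
    have h3 : (fun n => c n * y ^ n) = fun n => ∫ x, m n x * y ^ n ∂μ :=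
      funext fun n => (cInt n y).symm
    rw [h3]
    convert (sumc y hy'.le).hasSum using 1
    rfl

def GoodSeq (s : ℕ → ℝ) : Prop :=
  (∀ i, 0 ≤ s i) ∧ (∀ i, s i ≤ 1) ∧ Summable s ∧ ∑' i, s i = 1

lemma good_of_ae (ν : Measure (ℕ → ℝ)) (h_nonneg : ∀ᵐ s ∂ν, ∀ i, 0 ≤ s i)
    (h_mass : ∀ᵐ s ∂ν, ∑' i, s i = 1) : ∀ᵐ s ∂ν, GoodSeq s := by
  filter_upwards [h_nonneg, h_mass] with s h1 h2
  have hsum : Summable s := by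
    by_contra h
    rw [tsum_eq_zero_of_not_summable h] at h2
    norm_num at h2
  exact ⟨h1, fun i => by
    calc s i ≤ ∑' j, s j := hsum.le_tsum i (fun j _ => h1 j)
    _ = 1 := h2, hsum, h2⟩

lemma rpow_le_self {t : ℝ} (h0 : 0 ≤ t) (h1 : t ≤ 1) {p : ℝ} (hp : 1 ≤ p) :
    t ^ p ≤ t := by
  rcases eq_or_lt_of_le h0 with h0' | h0'
  · rw [← h0', Real.zero_rpow (by linarith)]
  · calc t ^ p ≤ t ^ (1:ℝ) := Real.rpow_le_rpow_of_exponent_ge h0' h1 hp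
    _ = t := Real.rpow_one t

lemma good_tail_sum {s : ℕ → ℝ} (hs : GoodSeq s) :
    Summable (fun i => s (i + 1)) ∧ ∑' i, s (i + 1) = 1 - s 0 := by
  obtain ⟨h0, h1, hsum, hmass⟩ := hs
  have ht : Summable (fun i => s (i + 1)) := (summable_nat_add_iff 1).2 hsum
  refine ⟨ht, ?_⟩
  have := hsum.tsum_eq_zero_add
  rw [hmass] at this
  linarith

-- the φ = lintegral identity
lemma phi_lint (ν : Measure (ℕ → ℝ)) (hgood : ∀ᵐ s ∂ν, GoodSeq s) {q : ℝ} (hq : 0 ≤ q) :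
    ∫ s, (1 - ∑' i, (s i) ^ (q + 1)) ∂ν
      = (∫⁻ s, ∑' i, ENNReal.ofReal (s i - (s i) ^ (q + 1)) ∂ν).toReal := by
  have hfacts : ∀ s : ℕ → ℝ, GoodSeq s →
      Summable (fun i => (s i) ^ (q + 1)) ∧
      (1 - ∑' i, (s i) ^ (q + 1) = ∑' i, (s i - (s i) ^ (q + 1))) ∧
      ENNReal.ofReal (1 - ∑' i, (s i) ^ (q + 1))
        = ∑' i, ENNReal.ofReal (s i - (s i) ^ (q + 1)) := by
    intro s hs
    obtain ⟨h0, h1, hsum, hmass⟩ := hs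
    have hple : ∀ i, (s i) ^ (q + 1) ≤ s i :=
      fun i => rpow_le_self (h0 i) (h1 i) (by linarith)
    have hsum2 : Summable (fun i => (s i) ^ (q + 1)) :=
      Summable.of_nonneg_of_le (fun i => Real.rpow_nonneg (h0 i) _) hple hsum
    have heq : 1 - ∑' i, (s i) ^ (q + 1) = ∑' i, (s i - (s i) ^ (q + 1)) := by
      rw [hsum.tsum_sub hsum2, hmass]
    refine ⟨hsum2, heq, ?_⟩
    rw [heq, ENNReal.ofReal_tsum_of_nonneg (fun i => sub_nonneg.2 (hple i))
      (hsum.sub hsum2)]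
  have hnn : 0 ≤ᵐ[ν] fun s => 1 - ∑' i, (s i) ^ (q + 1) := by
    filter_upwards [hgood] with s hs
    obtain ⟨hsum2, heq, _⟩ := hfacts s hs
    rw [heq]
    exact tsum_nonneg fun i => sub_nonneg.2 (rpow_le_self (hs.1 i) (hs.2.1 i) (by linarith))
  have hmeas : AEStronglyMeasurable (fun s : ℕ → ℝ => 1 - ∑' i, (s i) ^ (q + 1)) ν := by
    have hm : Measurable (fun s : ℕ → ℝ =>
        1 - (∑' i, ENNReal.ofReal ((s i) ^ (q + 1))).toReal) := by
      apply measurable_const.sub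
      have hrp : Continuous (fun t : ℝ => t ^ (q + 1)) :=
        Real.continuous_rpow_const (by linarith)
      exact (Measurable.ennreal_tsum fun i =>
        ((hrp.measurable.comp (measurable_pi_apply i))).ennreal_ofReal).ennreal_toReal
    refine (AEMeasurable.congr (f := fun s : ℕ → ℝ =>
        1 - (∑' i, ENNReal.ofReal ((s i) ^ (q + 1))).toReal)
      hm.aemeasurable ?_).aestronglyMeasurable
    filter_upwards [hgood] with s hs
    obtain ⟨hsum2, _, _⟩ := hfacts s hs
    rw [← ENNReal.ofReal_tsum_of_nonneg (fun i => Real.rpow_nonneg (hs.1 i) _) hsum2,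
      ENNReal.toReal_ofReal (tsum_nonneg fun i => Real.rpow_nonneg (hs.1 i) _)]
  rw [integral_eq_lintegral_of_nonneg_ae hnn hmeas]
  congr 1
  apply lintegral_congr_ae
  filter_upwards [hgood] with s hs
  exact (hfacts s hs).2.2

section
variable (ν : Measure (ℕ → ℝ))

noncomputable def XiM : Measure ℝ := Measure.sum (fun i : ℕ =>
  Measure.map (fun s : ℕ → ℝ => -Real.log (s i))
    (ν.withDensity (fun s => ENNReal.ofReal (s i))))

end
section
variable {ν : Measure (ℕ → ℝ)}

lemma Xi_eta (hgood : ∀ᵐ s ∂ν, GoodSeq s) {η : ℝ} (hη0 : 0 < η) (hη1 : η < 1) :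
    ∫⁻ x in Ioi (0:ℝ), ENNReal.ofReal (Real.exp (η * x) - 1) ∂(XiM ν)
      = ∫⁻ s, ∑' i, ENNReal.ofReal ((s i) ^ (1 - η) - s i) ∂ν := by
  unfold XiM
  rw [lint_sum_map ν _ (by fun_prop : Measurable fun x : ℝ =>
    ENNReal.ofReal (Real.exp (η * x) - 1))]
  apply lintegral_congr_ae
  filter_upwards [hgood] with s hs
  exact tsum_congr fun i => eval_eta hη0 hη1 (hs.1 i) (hs.2.1 i)

lemma Xi_q (hgood : ∀ᵐ s ∂ν, GoodSeq s) {q : ℝ} (hq : 0 ≤ q) :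
    ∫⁻ x in Ioi (0:ℝ), ENNReal.ofReal (1 - Real.exp (-(q * x))) ∂(XiM ν)
      = ∫⁻ s, ∑' i, ENNReal.ofReal (s i - (s i) ^ (q + 1)) ∂ν := by
  unfold XiM
  rw [lint_sum_map ν _ (by fun_prop : Measurable fun x : ℝ =>
    ENNReal.ofReal (1 - Real.exp (-(q * x))))]
  apply lintegral_congr_ae
  filter_upwards [hgood] with s hs
  exact tsum_congr fun i => eval_q hq (hs.1 i) (hs.2.1 i)

-- L7 : finiteness bound for A q
lemma Aq_bound (hgood : ∀ᵐ s ∂ν, GoodSeq s) {q : ℝ} (hq : 0 ≤ q) :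
    ∫⁻ s, ∑' i, ENNReal.ofReal (s i - (s i) ^ (q + 1)) ∂ν
      ≤ ENNReal.ofReal (q + 2) * ∫⁻ s, ENNReal.ofReal (1 - s 0) ∂ν := by
  rw [← lintegral_const_mul' _ _ ENNReal.ofReal_ne_top]
  apply lintegral_mono_ae
  filter_upwards [hgood] with s hs
  have h0 := hs.1
  have h1 := hs.2.1
  rw [tsum_eq_zero_add' ENNReal.summable]
  have hhead : ENNReal.ofReal (s 0 - (s 0) ^ (q + 1))
      ≤ ENNReal.ofReal ((q + 1) * (1 - s 0)) := by
    apply ENNReal.ofReal_le_ofReal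
    have hb := one_add_mul_self_le_rpow_one_add
      (show -1 ≤ s 0 - 1 by have := h0 0; linarith) (show 1 ≤ q + 1 by linarith)
    rw [show (1 : ℝ) + (s 0 - 1) = s 0 by ring] at hb
    have := h1 0
    nlinarith
  have htail : (∑' i, ENNReal.ofReal (s (i + 1) - (s (i + 1)) ^ (q + 1)))
      ≤ ENNReal.ofReal (1 - s 0) := by
    obtain ⟨ht, hts⟩ := good_tail_sum hs
    calc (∑' i, ENNReal.ofReal (s (i + 1) - (s (i + 1)) ^ (q + 1)))
        ≤ ∑' i, ENNReal.ofReal (s (i + 1)) := ENNReal.tsum_le_tsum fun i =>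
          ENNReal.ofReal_le_ofReal (by
            have := Real.rpow_nonneg (h0 (i + 1)) (q + 1); linarith)
      _ = ENNReal.ofReal (1 - s 0) := by
          rw [← ENNReal.ofReal_tsum_of_nonneg (fun i => h0 (i + 1)) ht, hts]
  calc ENNReal.ofReal (s 0 - (s 0) ^ (q + 1))
        + ∑' i, ENNReal.ofReal (s (i + 1) - (s (i + 1)) ^ (q + 1))
      ≤ ENNReal.ofReal ((q + 1) * (1 - s 0)) + ENNReal.ofReal (1 - s 0) :=
        add_le_add hhead htail
    _ = ENNReal.ofReal (q + 2) * ENNReal.ofReal (1 - s 0) := by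
        rcases le_or_gt (s 0) 1 with hle | hlt
        · rw [← ENNReal.ofReal_add (by nlinarith) (by linarith),
            ← ENNReal.ofReal_mul (by linarith)]
          congr 1
          ring
        · rw [ENNReal.ofReal_eq_zero.mpr (by nlinarith : (q+1) * (1 - s 0) ≤ 0),
            ENNReal.ofReal_eq_zero.mpr (by linarith : 1 - s 0 ≤ 0)]
          simp

-- L8 : forward bound
lemma eta_sum_bound (hgood : ∀ᵐ s ∂ν, GoodSeq s) {η : ℝ} (hη0 : 0 < η) (hη1 : η < 1) :
    ∫⁻ s, ∑' i, ENNReal.ofReal ((s i) ^ (1 - η) - s i) ∂ν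
      ≤ (∫⁻ s, ENNReal.ofReal (1 - s 0) ∂ν)
        + ∫⁻ s, ∑' i, ENNReal.ofReal ((s (i + 1)) ^ (1 - η)) ∂ν := by
  rw [← lintegral_add_left (by fun_prop : Measurable fun s : ℕ → ℝ =>
    ENNReal.ofReal (1 - s 0))]
  apply lintegral_mono_ae
  filter_upwards [hgood] with s hs
  rw [tsum_eq_zero_add' ENNReal.summable]
  apply add_le_add
  · apply ENNReal.ofReal_le_ofReal
    have := Real.rpow_le_one (hs.1 0) (hs.2.1 0) (by linarith : (0:ℝ) ≤ 1 - η)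
    linarith
  · exact ENNReal.tsum_le_tsum fun i => ENNReal.ofReal_le_ofReal (by
      have := hs.1 (i + 1); linarith)

-- L9 : converse bound
lemma tail_eta_bound (hgood : ∀ᵐ s ∂ν, GoodSeq s) {η : ℝ} (hη0 : 0 < η) (hη1 : η < 1) :
    ∫⁻ s, ∑' i, ENNReal.ofReal ((s (i + 1)) ^ (1 - η)) ∂ν
      ≤ (∫⁻ s, ENNReal.ofReal (1 - s 0) ∂ν)
        + ∫⁻ s, ∑' i, ENNReal.ofReal ((s i) ^ (1 - η) - s i) ∂ν := by
  rw [← lintegral_add_left (by fun_prop : Measurable fun s : ℕ → ℝ =>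
    ENNReal.ofReal (1 - s 0))]
  apply lintegral_mono_ae
  filter_upwards [hgood] with s hs
  have h0 := hs.1
  have h1 := hs.2.1
  have hge : ∀ i, s i ≤ (s i) ^ (1 - η) := by
    intro i
    rcases eq_or_lt_of_le (h0 i) with h | h
    · rw [← h, Real.zero_rpow (by linarith : (1:ℝ) - η ≠ 0)]
    · calc s i = (s i) ^ (1:ℝ) := (Real.rpow_one _).symm
        _ ≤ (s i) ^ (1 - η) :=
          Real.rpow_le_rpow_of_exponent_ge h (h1 i) (by linarith)
  have hsplit : ∀ i, ENNReal.ofReal ((s (i + 1)) ^ (1 - η))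
      = ENNReal.ofReal ((s (i + 1)) ^ (1 - η) - s (i + 1)) + ENNReal.ofReal (s (i + 1)) := by
    intro i
    rw [← ENNReal.ofReal_add (by have := hge (i + 1); linarith) (h0 (i + 1))]
    congr 1
    ring
  rw [tsum_congr hsplit, ENNReal.tsum_add]
  rw [add_comm]
  apply add_le_add
  · obtain ⟨ht, hts⟩ := good_tail_sum hs
    rw [← ENNReal.ofReal_tsum_of_nonneg (fun i => h0 (i + 1)) ht, hts]
  · calc (∑' i, ENNReal.ofReal ((s (i + 1)) ^ (1 - η) - s (i + 1)))
      ≤ ENNReal.ofReal ((s 0) ^ (1 - η) - s 0)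
        + ∑' i, ENNReal.ofReal ((s (i + 1)) ^ (1 - η) - s (i + 1)) := le_add_self
    _ = ∑' i, ENNReal.ofReal ((s i) ^ (1 - η) - s i) :=
        (tsum_eq_zero_add' (f := fun i => ENNReal.ofReal ((s i) ^ (1 - η) - s i))
          ENNReal.summable).symm

-- L10 : base integrability
lemma base_integrable (μ : Measure ℝ) (hx : ∀ᵐ x ∂μ, 0 < x) {η a : ℝ} (hη0 : 0 < η)
    (hfin : ∫⁻ x, ENNReal.ofReal (Real.exp (η * x) - 1) ∂μ ≠ ∞) (ha : -η < a) :
    Integrable (fun x => 1 - Real.exp (-(a * x))) μ := by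
  obtain ⟨C, hC1, hC⟩ : ∃ C : ℝ, 1 ≤ C ∧ C = (|a| + 1) / η + 1 :=
    ⟨_, le_add_of_nonneg_left (by positivity), rfl⟩
  constructor
  · exact (by fun_prop : Continuous fun x : ℝ => 1 - Real.exp (-(a * x))).aestronglyMeasurable
  · rw [hasFiniteIntegral_iff_norm]
    have hbound : ∀ᵐ x ∂μ, ENNReal.ofReal ‖1 - Real.exp (-(a * x))‖
        ≤ ENNReal.ofReal C * ENNReal.ofReal (Real.exp (η * x) - 1) := by
      filter_upwards [hx] with x hx0
      rw [← ENNReal.ofReal_mul (by linarith)]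
      apply ENNReal.ofReal_le_ofReal
      have hexpnn : (0:ℝ) ≤ Real.exp (η * x) - 1 := by
        have : Real.exp 0 ≤ Real.exp (η * x) := Real.exp_le_exp.mpr (by positivity)
        rw [Real.exp_zero] at this
        linarith
      have hηx : η * x ≤ Real.exp (η * x) - 1 := by
        have := Real.add_one_le_exp (η * x)
        linarith
      rcases le_or_gt 0 a with hA | hA
      · have he1 : Real.exp (-(a * x)) ≤ 1 := by
          rw [← Real.exp_zero]
          exact Real.exp_le_exp.mpr (by nlinarith)
        have he2 : 1 - a * x ≤ Real.exp (-(a * x)) := by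
          have := Real.add_one_le_exp (-(a * x))
          linarith
        rw [Real.norm_eq_abs, abs_of_nonneg (by linarith)]
        have h3 : 1 - Real.exp (-(a * x)) ≤ a * x := by linarith
        have h4 : a * x ≤ (|a| + 1) / η * (η * x) := by
          have he : (|a| + 1) / η * (η * x) = (|a| + 1) * x := by
            field_simp
          rw [he]
          nlinarith [le_abs_self a, hx0]
        have h5 : (|a| + 1) / η * (η * x) ≤ (|a| + 1) / η * (Real.exp (η * x) - 1) :=
          mul_le_mul_of_nonneg_left hηx (by positivity)
        have h6 : (|a| + 1) / η * (Real.exp (η * x) - 1) ≤ C * (Real.exp (η * x) - 1) :=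
          mul_le_mul_of_nonneg_right (by rw [hC]; linarith) hexpnn
        linarith
      · have he1 : 1 ≤ Real.exp (-(a * x)) := by
          rw [← Real.exp_zero]
          exact Real.exp_le_exp.mpr (by nlinarith)
        rw [Real.norm_eq_abs, abs_of_nonpos (by linarith)]
        have h3 : Real.exp (-(a * x)) ≤ Real.exp (η * x) := by
          apply Real.exp_le_exp.mpr
          nlinarith
        nlinarith [mul_nonneg (by linarith : (0:ℝ) ≤ C - 1) hexpnn]
    calc ∫⁻ x, ENNReal.ofReal ‖1 - Real.exp (-(a * x))‖ ∂μ
        ≤ ∫⁻ x, ENNReal.ofReal C * ENNReal.ofReal (Real.exp (η * x) - 1) ∂μ :=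
          lintegral_mono_ae hbound
      _ = ENNReal.ofReal C * ∫⁻ x, ENNReal.ofReal (Real.exp (η * x) - 1) ∂μ :=
          lintegral_const_mul' _ _ ENNReal.ofReal_ne_top
      _ < ∞ := ENNReal.mul_lt_top ENNReal.ofReal_lt_top (lt_of_le_of_ne le_top hfin)

end

lemma pow_div_factorial_le_exp {t : ℝ} (ht : 0 ≤ t) (n : ℕ) :
    t ^ n / n.factorial ≤ Real.exp t := by
  have h := NormedSpace.expSeries_div_hasSum_exp t
  rw [← Real.exp_eq_exp_ℝ] at h
  exact le_hasSum h n (fun j _ => by positivity)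

lemma landau (μh : Measure ℝ) [IsFiniteMeasure μh] (hx : ∀ᵐ x ∂μh, 0 < x)
    {K : ℝ → ℝ} (hK : AnalyticAt ℝ K 0)
    (hKeq : ∀ q : ℝ, 0 ≤ q → K q = ∫ x, (1 - Real.exp (-(q * x))) ∂μh) :
    ∃ ε : ℝ, 0 < ε ∧ ∫⁻ x, ENNReal.ofReal (Real.exp (ε * x)) ∂μh ≠ ∞ := by
  obtain ⟨p, r, hball⟩ := hK
  obtain ⟨δ', hδ'0, hδ'r⟩ := ENNReal.lt_iff_exists_nnreal_btwn.mp hball.r_pos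
  set δ : ℝ := (δ' : ℝ) with hδdef
  have hδ0 : 0 < δ := by
    have := ENNReal.coe_pos.mp hδ'0
    exact_mod_cast this
  have hball2 : HasFPowerSeriesOnBall K p 0 (ENNReal.ofReal δ) := by
    have : ENNReal.ofReal δ = (δ' : ℝ≥0∞) := by
      rw [hδdef, ENNReal.ofReal_coe_nnreal]
    rw [this]
    exact hball.mono hδ'0 hδ'r.le
  set a : ℝ := δ / 4 with hadef
  have ha : 0 < a := by positivity
  have hacoe : ((‖a‖₊ : ℝ≥0) : ℝ≥0∞) = ENNReal.ofReal a := by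
    rw [← enorm_eq_nnnorm, ← ofReal_norm, Real.norm_eq_abs, abs_of_pos ha]
  have hco := hball2.changeOrigin (y := a)
    (by rw [hacoe]; exact (ENNReal.ofReal_lt_ofReal_iff hδ0).mpr (by rw [hadef]; linarith))
  rw [zero_add] at hco
  have hrad : ENNReal.ofReal (δ / 2) < (p.changeOrigin a).radius := by
    apply lt_of_lt_of_le _ hco.r_le
    rw [hacoe, ← ENNReal.ofReal_sub δ (by positivity : (0:ℝ) ≤ a)]
    exact (ENNReal.ofReal_lt_ofReal_iff (by rw [hadef]; linarith)).mpr
      (by rw [hadef]; linarith)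
  -- domination facts for the Laplace expansion at a
  have Hdom : ∫⁻ x, ENNReal.ofReal ((Real.exp (a * x) - 1) * Real.exp (-(a * x))) ∂μh
      ≠ ∞ := by
    have hb : ∀ x : ℝ, (Real.exp (a * x) - 1) * Real.exp (-(a * x)) ≤ 1 := by
      intro x
      have h1 : Real.exp (a * x) * Real.exp (-(a * x)) = 1 := by
        rw [← Real.exp_add, add_neg_cancel, Real.exp_zero]
      nlinarith [Real.exp_pos (-(a * x))]
    have hle : (∫⁻ x, ENNReal.ofReal ((Real.exp (a * x) - 1) * Real.exp (-(a * x))) ∂μh)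
        ≤ ∫⁻ _, 1 ∂μh :=
      lintegral_mono fun x => (ENNReal.ofReal_le_ofReal (hb x)).trans_eq ENNReal.ofReal_one
    rw [lintegral_one] at hle
    exact (hle.trans_lt (measure_lt_top _ _)).ne
  have Hbase : Integrable (fun x => 1 - Real.exp (-(a * x))) μh := by
    apply (integrable_const (1:ℝ)).mono'
      ((by fun_prop : Continuous fun x : ℝ => 1 - Real.exp (-(a * x))).aestronglyMeasurable)
    filter_upwards [hx] with x hx0
    have he1 : Real.exp (-(a * x)) ≤ 1 := by
      rw [← Real.exp_zero]
      exact Real.exp_le_exp.mpr (by nlinarith)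
    rw [Real.norm_eq_abs]
    rw [abs_of_nonneg (by linarith)]
    nlinarith [Real.exp_pos (-(a * x))]
  have hexp := laplace_expansion μh hx (a := a) (ρ := a) ha Hdom Hbase
  have hnhds : (fun q => ∫ x, (1 - Real.exp (-(q * x))) ∂μh) =ᶠ[𝓝 a] K := by
    filter_upwards [eventually_gt_nhds ha] with q hq
    exact (hKeq q hq.le).symm
  have hKat := (hexp.hasFPowerSeriesAt).congr hnhds
  have hEq := (hco.hasFPowerSeriesAt).eq_formalMultilinearSeries hKat
  rw [hEq] at hrad
  -- summability of coefficients at radius δ/2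
  have hcoe2 : (((δ / 2 : ℝ).toNNReal : ℝ≥0) : ℝ≥0∞) = ENNReal.ofReal (δ / 2) := rfl
  have hsumm := FormalMultilinearSeries.summable_norm_mul_pow _
    (r := (δ / 2 : ℝ).toNNReal) (by rw [hcoe2]; exact hrad)
  rw [show (((δ / 2 : ℝ).toNNReal : ℝ≥0) : ℝ) = δ / 2 from
    Real.coe_toNNReal _ (by positivity)] at hsumm
  -- moments
  set In : ℕ → ℝ := fun n => ∫ x, x ^ n * Real.exp (-(a * x)) ∂μh with hIn
  have hInn : ∀ n, 0 ≤ In n := by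
    intro n
    apply integral_nonneg_of_ae
    filter_upwards [hx] with x hx0
    positivity
  have hIint : ∀ n : ℕ, Integrable (fun x => x ^ n * Real.exp (-(a * x))) μh := by
    intro n
    apply (integrable_const ((n.factorial : ℝ) / a ^ n)).mono'
      ((by fun_prop : Continuous fun x : ℝ => x ^ n * Real.exp (-(a * x))).aestronglyMeasurable)
    filter_upwards [hx] with x hx0
    have h1 : (a * x) ^ n / n.factorial ≤ Real.exp (a * x) :=
      pow_div_factorial_le_exp (by positivity) n
    have h2 : (a * x) ^ n * Real.exp (-(a * x)) ≤ (n.factorial : ℝ) := by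
      have h3 : (a * x) ^ n ≤ (n.factorial : ℝ) * Real.exp (a * x) := by
        rw [div_le_iff₀ (by positivity : (0:ℝ) < (n.factorial : ℝ))] at h1
        linarith
      have h4 := mul_le_mul_of_nonneg_right h3 (Real.exp_pos (-(a * x))).le
      rwa [mul_assoc, ← Real.exp_add, add_neg_cancel, Real.exp_zero, mul_one] at h4
    rw [Real.norm_eq_abs, abs_of_nonneg (by positivity)]
    rw [le_div_iff₀ (by positivity : (0:ℝ) < a ^ n)]
    calc x ^ n * Real.exp (-(a * x)) * a ^ n
        = (a * x) ^ n * Real.exp (-(a * x)) := by rw [mul_pow]; ring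
      _ ≤ (n.factorial : ℝ) := h2
  have hIofReal : ∀ n : ℕ, ENNReal.ofReal (In n)
      = ∫⁻ x, ENNReal.ofReal (x ^ n * Real.exp (-(a * x))) ∂μh := by
    intro n
    apply ofReal_integral_eq_lintegral_ofReal (hIint n)
    filter_upwards [hx] with x hx0
    positivity
  -- norm of coefficients
  have hcs : ∀ n : ℕ, ‖(FormalMultilinearSeries.ofScalars ℝ (fun n =>
        if n = 0 then ∫ x, (1 - Real.exp (-(a * x))) ∂μh
        else (-1) ^ (n + 1) / n.factorial * In n)) (n + 1)‖
      = In (n + 1) / (n + 1).factorial := by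
    intro n
    rw [FormalMultilinearSeries.ofScalars_norm]
    simp only [Nat.succ_ne_zero, if_false, reduceIte]
    rw [norm_mul, norm_div, norm_pow, norm_neg, norm_one, one_pow,
      Real.norm_natCast, Real.norm_eq_abs, abs_of_nonneg (hInn (n + 1))]
    ring
  refine ⟨δ / 4, by positivity, ?_⟩
  -- pointwise expansion of exp((δ/4) x)
  have hpt : ∀ x : ℝ, 0 < x → ENNReal.ofReal (Real.exp ((δ / 4) * x))
      = ∑' n, ENNReal.ofReal ((δ / 2) ^ n / n.factorial * (x ^ n * Real.exp (-(a * x)))) := by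
    intro x hx0
    have h0 := (NormedSpace.expSeries_div_hasSum_exp ((δ / 2) * x)).mul_right
      (Real.exp (-(a * x)))
    rw [← Real.exp_eq_exp_ℝ] at h0
    have h1 : Real.exp ((δ / 2) * x) * Real.exp (-(a * x)) = Real.exp ((δ / 4) * x) := by
      rw [← Real.exp_add]
      congr 1
      rw [hadef]
      ring
    rw [h1] at h0
    have h2 : (fun n : ℕ => ((δ / 2) * x) ^ n / n.factorial * Real.exp (-(a * x)))
        = fun n => (δ / 2) ^ n / n.factorial * (x ^ n * Real.exp (-(a * x))) := by
      funext n
      rw [mul_pow]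
      ring
    rw [h2] at h0
    rw [← h0.tsum_eq]
    exact ENNReal.ofReal_tsum_of_nonneg (fun n => by positivity) h0.summable
  have hswap : ∫⁻ x, ENNReal.ofReal (Real.exp ((δ / 4) * x)) ∂μh
      = ∑' n, ∫⁻ x, ENNReal.ofReal ((δ / 2) ^ n / n.factorial
          * (x ^ n * Real.exp (-(a * x)))) ∂μh := by
    rw [← lintegral_tsum (fun n => ((by fun_prop : Continuous fun x : ℝ =>
      (δ / 2) ^ n / n.factorial * (x ^ n * Real.exp (-(a * x)))).measurable).ennreal_ofReal.aemeasurable)]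
    apply lintegral_congr_ae
    filter_upwards [hx] with x hx0
    exact hpt x hx0
  have hJ : ∀ n : ℕ, (∫⁻ x, ENNReal.ofReal ((δ / 2) ^ n / n.factorial
        * (x ^ n * Real.exp (-(a * x)))) ∂μh)
      = ENNReal.ofReal ((δ / 2) ^ n / n.factorial) * ENNReal.ofReal (In n) := by
    intro n
    rw [hIofReal n, ← lintegral_const_mul' _ _ ENNReal.ofReal_ne_top]
    apply lintegral_congr_ae
    filter_upwards [hx] with x hx0
    rw [← ENNReal.ofReal_mul (by positivity)]
  rw [hswap, tsum_eq_zero_add' ENNReal.summable]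
  apply ENNReal.add_ne_top.mpr
  constructor
  · rw [hJ 0]
    exact (ENNReal.mul_lt_top ENNReal.ofReal_lt_top ENNReal.ofReal_lt_top).ne
  · have htail : ∀ n : ℕ, (∫⁻ x, ENNReal.ofReal ((δ / 2) ^ (n + 1) / (n + 1).factorial
        * (x ^ (n + 1) * Real.exp (-(a * x)))) ∂μh)
        = ENNReal.ofReal (In (n + 1) / (n + 1).factorial * (δ / 2) ^ (n + 1)) := by
      intro n
      rw [hJ (n + 1), ← ENNReal.ofReal_mul (by positivity)]
      congr 1
      ring
    rw [tsum_congr htail]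
    have hsumm2 : Summable (fun n => In (n + 1) / (n + 1).factorial * (δ / 2) ^ (n + 1)) := by
      have := (summable_nat_add_iff 1).2 hsumm
      apply this.congr
      intro n
      rw [hcs n]
    rw [← ENNReal.ofReal_tsum_of_nonneg (fun n =>
      mul_nonneg (div_nonneg (hInn _) (by positivity)) (by positivity)) hsumm2]
    exact ENNReal.ofReal_ne_top

/-- Assumption (Exp): if `∫ ∑_{i ≥ 2} s_i^{1-η} dν < ∞` for some `η ∈ (0,1)`, then
`∫ (e^{ηx} - 1) Ξ(dx) < ∞`, where `Ξ(dx) = ∑_i e^{-x} ν(-log s_i ∈ dx)` is the Lévy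
measure of the tagged-fragment subordinator; consequently the Laplace exponent `φ`
admits an analytic continuation on `(-η', ∞)` for some `η' > 0`, and conversely. -/
theorem stmt_4 (ν : Measure (ℕ → ℝ))
    (h_mono : ∀ᵐ s ∂ν, Antitone s)
    (h_nonneg : ∀ᵐ s ∂ν, ∀ i, 0 ≤ s i)
    (h_mass : ∀ᵐ s ∂ν, ∑' i, s i = 1)
    (h_int : ∫⁻ s, ENNReal.ofReal (1 - s 0) ∂ν < ⊤) :
    let Ξ : Measure ℝ := Measure.sum (fun i : ℕ =>
      Measure.map (fun s : ℕ → ℝ => -Real.log (s i))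
        (ν.withDensity (fun s => ENNReal.ofReal (s i))))
    let φ : ℝ → ℝ := fun q => ∫ s, (1 - ∑' i, (s i) ^ (q + 1)) ∂ν
    (∀ η : ℝ, η ∈ Set.Ioo (0 : ℝ) 1 →
        (∫⁻ s, ∑' i : ℕ, ENNReal.ofReal ((s (i + 1)) ^ (1 - η)) ∂ν) < ⊤ →
        (∫⁻ x in Set.Ioi (0 : ℝ), ENNReal.ofReal (Real.exp (η * x) - 1) ∂Ξ) < ⊤ ∧
        ∃ η' > (0 : ℝ), ∃ F : ℝ → ℝ,
          AnalyticOnNhd ℝ F (Set.Ioi (-η')) ∧ ∀ q ≥ (0 : ℝ), F q = φ q) ∧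
    ((∃ η' > (0 : ℝ), ∃ F : ℝ → ℝ,
        AnalyticOnNhd ℝ F (Set.Ioi (-η')) ∧ ∀ q ≥ (0 : ℝ), F q = φ q) →
      ∃ η ∈ Set.Ioo (0 : ℝ) 1,
        (∫⁻ s, ∑' i : ℕ, ENNReal.ofReal ((s (i + 1)) ^ (1 - η)) ∂ν) < ⊤) := by
  intro Ξ φ
  have hgood : ∀ᵐ s ∂ν, GoodSeq s := good_of_ae ν h_nonneg h_mass
  have hxμ : ∀ᵐ x ∂((XiM ν).restrict (Ioi 0)), 0 < x := by
    filter_upwards [ae_restrict_mem (measurableSet_Ioi : MeasurableSet (Ioi (0:ℝ)))] with x hx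
    exact hx
  -- basic identities
  have hAeq : ∀ q : ℝ, 0 ≤ q →
      (∫⁻ x, ENNReal.ofReal (1 - Real.exp (-(q * x))) ∂((XiM ν).restrict (Ioi 0)))
        = ∫⁻ s, ∑' i, ENNReal.ofReal (s i - (s i) ^ (q + 1)) ∂ν :=
    fun q hq => Xi_q hgood hq
  have hAfin : ∀ q : ℝ, 0 ≤ q →
      (∫⁻ x, ENNReal.ofReal (1 - Real.exp (-(q * x))) ∂((XiM ν).restrict (Ioi 0))) ≠ ∞ := by
    intro q hq
    rw [hAeq q hq]
    exact ((Aq_bound hgood hq).trans_lt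
      (ENNReal.mul_lt_top ENNReal.ofReal_lt_top h_int)).ne
  have hφeq : ∀ q : ℝ, 0 ≤ q → φ q
      = (∫⁻ x, ENNReal.ofReal (1 - Real.exp (-(q * x))) ∂((XiM ν).restrict (Ioi 0))).toReal := by
    intro q hq
    rw [hAeq q hq]
    exact phi_lint ν hgood hq
  have hFeqφ : ∀ q : ℝ, 0 ≤ q →
      (∫ x, (1 - Real.exp (-(q * x))) ∂((XiM ν).restrict (Ioi 0))) = φ q := by
    intro q hq
    rw [hφeq q hq, integral_eq_lintegral_of_nonneg_ae ?_ ?_]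
    · filter_upwards [hxμ] with x hx0
      have : Real.exp (-(q * x)) ≤ 1 := by
        rw [← Real.exp_zero]
        exact Real.exp_le_exp.mpr (by nlinarith)
      simp only [Pi.zero_apply]
      linarith
    · exact (by fun_prop : Continuous fun x : ℝ =>
        1 - Real.exp (-(q * x))).aestronglyMeasurable
  constructor
  · -- forward direction
    rintro η ⟨hη0, hη1⟩ Hν
    have hXiEta : (∫⁻ x in Ioi (0:ℝ), ENNReal.ofReal (Real.exp (η * x) - 1) ∂Ξ)
        = ∫⁻ s, ∑' i, ENNReal.ofReal ((s i) ^ (1 - η) - s i) ∂ν :=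
      Xi_eta hgood hη0 hη1
    have hfin : (∫⁻ x in Ioi (0:ℝ), ENNReal.ofReal (Real.exp (η * x) - 1) ∂Ξ) < ⊤ := by
      rw [hXiEta]
      exact (eta_sum_bound hgood hη0 hη1).trans_lt (ENNReal.add_lt_top.mpr ⟨h_int, Hν⟩)
    refine ⟨hfin, η / 2, by positivity,
      fun q => ∫ x, (1 - Real.exp (-(q * x))) ∂((XiM ν).restrict (Ioi 0)), ?_,
      fun q hq => hFeqφ q hq⟩
    intro b hb
    rw [mem_Ioi] at hb
    have hXifin : (∫⁻ x, ENNReal.ofReal (Real.exp (η * x) - 1)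
        ∂((XiM ν).restrict (Ioi 0))) ≠ ∞ := hfin.ne
    have Hdom : (∫⁻ x, ENNReal.ofReal ((Real.exp ((η / 2) * x) - 1) * Real.exp (-(b * x)))
        ∂((XiM ν).restrict (Ioi 0))) ≠ ∞ := by
      apply ne_top_of_le_ne_top hXifin
      apply lintegral_mono_ae
      filter_upwards [hxμ] with x hx0
      apply ENNReal.ofReal_le_ofReal
      have k1 : Real.exp (-(b * x)) ≤ Real.exp ((η / 2) * x) :=
        Real.exp_le_exp.mpr (by nlinarith)
      have k2 : (1:ℝ) ≤ Real.exp ((η / 2) * x) := by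
        rw [← Real.exp_zero]
        exact Real.exp_le_exp.mpr (by positivity)
      have k3 : Real.exp ((η / 2) * x) * Real.exp ((η / 2) * x) = Real.exp (η * x) := by
        rw [← Real.exp_add]
        congr 1
        ring
      nlinarith [mul_le_mul_of_nonneg_left k1 (by linarith : (0:ℝ) ≤ Real.exp ((η / 2) * x) - 1)]
    have Hbase := base_integrable ((XiM ν).restrict (Ioi 0)) hxμ hη0 hXifin
      (by linarith : -η < b)
    exact (laplace_expansion ((XiM ν).restrict (Ioi 0)) hxμ
      (by positivity : 0 < η / 2) Hdom Hbase).analyticAt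
  · -- converse direction
    rintro ⟨η', hη'0, F, hF, hFφ⟩
    set μh : Measure ℝ := ((XiM ν).restrict (Ioi 0)).withDensity
      (fun x => ENNReal.ofReal (1 - Real.exp (-(1 * x)))) with hμh
    have hdmeas : Measurable fun x : ℝ => ENNReal.ofReal (1 - Real.exp (-(1 * x))) := by
      fun_prop
    haveI : IsFiniteMeasure μh := by
      constructor
      rw [hμh, withDensity_apply _ MeasurableSet.univ, Measure.restrict_univ]
      exact lt_of_le_of_ne le_top (hAfin 1 one_pos.le)
    have hxμh : ∀ᵐ x ∂μh, 0 < x :=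
      Eventually.filter_mono
        ((withDensity_absolutelyContinuous ((XiM ν).restrict (Ioi 0)) _).ae_le) hxμ
    set K : ℝ → ℝ := fun q => F q - F (q + 1)
      + (∫⁻ x, ENNReal.ofReal (1 - Real.exp (-(1 * x)))
          ∂((XiM ν).restrict (Ioi 0))).toReal with hK
    have hK0 : AnalyticAt ℝ K 0 := by
      have h1 : AnalyticAt ℝ F 0 := hF 0 (by rw [mem_Ioi]; linarith)
      have h2 : AnalyticAt ℝ (fun q : ℝ => F (q + 1)) 0 := by
        have hf1 : AnalyticAt ℝ (fun q : ℝ => q + 1) 0 := by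
          exact analyticAt_id.add analyticAt_const
        have hg1 : AnalyticAt ℝ F ((0:ℝ) + 1) :=
          hF ((0:ℝ) + 1) (by rw [mem_Ioi]; linarith)
        exact AnalyticAt.comp (f := fun q : ℝ => q + 1) (x := (0:ℝ)) hg1 hf1
      exact (h1.sub h2).add analyticAt_const
    have hKeq : ∀ q : ℝ, 0 ≤ q → K q = ∫ x, (1 - Real.exp (-(q * x))) ∂μh := by
      intro q hq
      have e1 : K q = (∫⁻ x, ENNReal.ofReal (1 - Real.exp (-(q * x)))
            ∂((XiM ν).restrict (Ioi 0))).toReal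
          - (∫⁻ x, ENNReal.ofReal (1 - Real.exp (-((q + 1) * x)))
            ∂((XiM ν).restrict (Ioi 0))).toReal
          + (∫⁻ x, ENNReal.ofReal (1 - Real.exp (-(1 * x)))
            ∂((XiM ν).restrict (Ioi 0))).toReal := by
        simp only [hK]
        rw [hFφ q hq, hFφ (q + 1) (by linarith), hφeq q hq, hφeq (q + 1) (by linarith)]
      have hD : (∫⁻ x, ENNReal.ofReal (1 - Real.exp (-(q * x))) ∂μh)
          = ∫⁻ x, ENNReal.ofReal ((1 - Real.exp (-(1 * x))) * (1 - Real.exp (-(q * x))))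
            ∂((XiM ν).restrict (Ioi 0)) := by
        rw [hμh, lintegral_withDensity_eq_lintegral_mul _ hdmeas
          (by fun_prop : Measurable fun x : ℝ => ENNReal.ofReal (1 - Real.exp (-(q * x))))]
        apply lintegral_congr_ae
        filter_upwards [hxμ] with x hx0
        have h11 : (0:ℝ) ≤ 1 - Real.exp (-(1 * x)) := by
          have : Real.exp (-(1 * x)) ≤ 1 :=
            Real.exp_le_one_iff.mpr (by nlinarith)
          linarith
        exact (ENNReal.ofReal_mul h11).symm
      have hexp1 : ∀ x : ℝ, 0 < x → (0:ℝ) ≤ 1 - Real.exp (-(1 * x)) := by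
        intro x hx0
        have : Real.exp (-(1 * x)) ≤ 1 :=
          Real.exp_le_one_iff.mpr (by nlinarith)
        linarith
      have hexpq : ∀ x : ℝ, 0 < x → (0:ℝ) ≤ 1 - Real.exp (-(q * x)) := by
        intro x hx0
        have : Real.exp (-(q * x)) ≤ 1 :=
          Real.exp_le_one_iff.mpr (by nlinarith)
        linarith
      have hkey : (∫⁻ x, ENNReal.ofReal (1 - Real.exp (-(q * x)))
            ∂((XiM ν).restrict (Ioi 0)))
          + (∫⁻ x, ENNReal.ofReal (1 - Real.exp (-(1 * x)))
            ∂((XiM ν).restrict (Ioi 0)))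
          = (∫⁻ x, ENNReal.ofReal (1 - Real.exp (-((q + 1) * x)))
            ∂((XiM ν).restrict (Ioi 0)))
          + ∫⁻ x, ENNReal.ofReal ((1 - Real.exp (-(1 * x))) * (1 - Real.exp (-(q * x))))
            ∂((XiM ν).restrict (Ioi 0)) := by
        rw [← lintegral_add_left (by fun_prop : Measurable fun x : ℝ =>
          ENNReal.ofReal (1 - Real.exp (-(q * x)))),
          ← lintegral_add_left (by fun_prop : Measurable fun x : ℝ =>
          ENNReal.ofReal (1 - Real.exp (-((q + 1) * x))))]
        apply lintegral_congr_ae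
        filter_upwards [hxμ] with x hx0
        have h1 := hexp1 x hx0
        have h2 := hexpq x hx0
        have h3 : (0:ℝ) ≤ 1 - Real.exp (-((q + 1) * x)) := by
          have : Real.exp (-((q + 1) * x)) ≤ 1 :=
            Real.exp_le_one_iff.mpr (by nlinarith)
          linarith
        rw [← ENNReal.ofReal_add h2 h1, ← ENNReal.ofReal_add h3 (mul_nonneg h1 h2)]
        congr 1
        have he : Real.exp (-((q + 1) * x)) = Real.exp (-(q * x)) * Real.exp (-(1 * x)) := by
          rw [← Real.exp_add]
          congr 1
          ring
        rw [he]
        ring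
      have hDfin : (∫⁻ x, ENNReal.ofReal ((1 - Real.exp (-(1 * x)))
          * (1 - Real.exp (-(q * x)))) ∂((XiM ν).restrict (Ioi 0))) ≠ ∞ := by
        have h4 : (∫⁻ x, ENNReal.ofReal (1 - Real.exp (-((q + 1) * x)))
              ∂((XiM ν).restrict (Ioi 0)))
            + (∫⁻ x, ENNReal.ofReal ((1 - Real.exp (-(1 * x)))
              * (1 - Real.exp (-(q * x)))) ∂((XiM ν).restrict (Ioi 0))) ≠ ∞ := by
          rw [← hkey]
          exact ENNReal.add_ne_top.mpr ⟨hAfin q hq, hAfin 1 one_pos.le⟩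
        exact (ENNReal.add_ne_top.mp h4).2
      rw [integral_eq_lintegral_of_nonneg_ae ?_ ?_]
      · rw [hD, e1]
        have htR := congrArg ENNReal.toReal hkey
        rw [ENNReal.toReal_add (hAfin q hq) (hAfin 1 one_pos.le),
          ENNReal.toReal_add (hAfin (q + 1) (by linarith)) hDfin] at htR
        linarith
      · filter_upwards [hxμh] with x hx0
        simp only [Pi.zero_apply]
        exact hexpq x hx0
      · exact (by fun_prop : Continuous fun x : ℝ =>
          1 - Real.exp (-(q * x))).aestronglyMeasurable
    obtain ⟨ε, hε0, hεfin⟩ := landau μh hxμh hK0 hKeq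
    have hη0 : 0 < min ε (1/2 : ℝ) := lt_min hε0 (by norm_num)
    have hη1 : min ε (1/2 : ℝ) < 1 := lt_of_le_of_lt (min_le_right _ _) (by norm_num)
    refine ⟨min ε (1/2 : ℝ), ⟨hη0, hη1⟩, ?_⟩
    have hchain : (∫⁻ s, ∑' i, ENNReal.ofReal ((s i) ^ (1 - min ε (1/2 : ℝ)) - s i) ∂ν)
        ≠ ∞ := by
      rw [← Xi_eta hgood hη0 hη1]
      apply ne_top_of_le_ne_top hεfin
      calc (∫⁻ x, ENNReal.ofReal (Real.exp (min ε (1/2 : ℝ) * x) - 1)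
            ∂((XiM ν).restrict (Ioi 0)))
          ≤ ∫⁻ x, ENNReal.ofReal ((1 - Real.exp (-(1 * x)))
              * Real.exp (min ε (1/2 : ℝ) * x)) ∂((XiM ν).restrict (Ioi 0)) := by
            apply lintegral_mono_ae
            filter_upwards [hxμ] with x hx0
            apply ENNReal.ofReal_le_ofReal
            have he : Real.exp (-(1 * x)) * Real.exp (min ε (1/2 : ℝ) * x)
                = Real.exp ((min ε (1/2 : ℝ) - 1) * x) := by
              rw [← Real.exp_add]
              congr 1
              ring
            have hle1 : Real.exp ((min ε (1/2 : ℝ) - 1) * x) ≤ 1 := by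
              apply Real.exp_le_one_iff.mpr
              have : min ε (1/2 : ℝ) - 1 < 0 := by linarith
              nlinarith
            nlinarith [he]
        _ = ∫⁻ x, ENNReal.ofReal (Real.exp (min ε (1/2 : ℝ) * x)) ∂μh := by
            rw [hμh, lintegral_withDensity_eq_lintegral_mul _ hdmeas
              (by fun_prop : Measurable fun x : ℝ =>
                ENNReal.ofReal (Real.exp (min ε (1/2 : ℝ) * x)))]
            apply lintegral_congr_ae
            filter_upwards [hxμ] with x hx0
            have h11 : (0:ℝ) ≤ 1 - Real.exp (-(1 * x)) := by
              have : Real.exp (-(1 * x)) ≤ 1 :=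
                Real.exp_le_one_iff.mpr (by nlinarith)
              linarith
            simp only [Pi.mul_apply]
            exact ENNReal.ofReal_mul h11
        _ ≤ ∫⁻ x, ENNReal.ofReal (Real.exp (ε * x)) ∂μh := by
            apply lintegral_mono_ae
            filter_upwards [hxμh] with x hx0
            apply ENNReal.ofReal_le_ofReal
            apply Real.exp_le_exp.mpr
            have := min_le_left ε (1/2 : ℝ)
            nlinarith
    exact lt_of_le_of_lt (tail_eta_bound hgood hη0 hη1)
      (ENNReal.add_lt_top.mpr ⟨h_int, lt_of_le_of_ne le_top hchain⟩)
end

section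
/- For $a \in (0,1)$, define $g_a(x) = \frac{1}{\Gamma(a)} x^{3-2a}(1-x)^{a-1}\sum_{n=0}^{\infty} \frac{(2)_n (1-a)_n}{(a)_n}\cdot \frac{(1-x)^n}{n!}$ for $x \in (0,1)$, where $(u)_n = u(u+1)\cdots(u+n-1)$ is the Pochhammer symbol. Then for every $q > 0$, the Mellin transform satisfies $\int_0^1 x^{q-1} g_a(x)\,\mathrm dx = \frac{\Gamma(q)\,\Gamma(q+3-2a)}{\Gamma(q+1-a)\,\Gamma(q+2)}$. -/
open MeasureTheory
open Real Set

lemma cpow_eq_ofReal {x u : ℝ} (hx0 : 0 ≤ x) (hx1 : 0 ≤ 1 - x) (v : ℝ) :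
    ((x:ℂ) ^ ((u:ℂ) - 1) * (1 - (x:ℂ)) ^ ((v:ℂ) - 1))
      = ((x ^ (u - 1) * (1 - x) ^ (v - 1) : ℝ) : ℂ) := by
  rw [Complex.ofReal_mul, Complex.ofReal_cpow hx0, Complex.ofReal_cpow hx1]
  push_cast
  ring

lemma betaIntegrableOn {u v : ℝ} (hu : 0 < u) (hv : 0 < v) :
    IntegrableOn (fun x : ℝ => x ^ (u - 1) * (1 - x) ^ (v - 1)) (Ioo 0 1) := by
  have h := Complex.betaIntegral_convergent (u := (u : ℂ)) (v := (v : ℂ)) (by simpa) (by simpa)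
  rw [intervalIntegrable_iff_integrableOn_Ioc_of_le zero_le_one] at h
  have h3 : IntegrableOn (fun x : ℝ =>
      ((x : ℂ) ^ ((u : ℂ) - 1) * (1 - (x : ℂ)) ^ ((v : ℂ) - 1)).re) (Ioo 0 1) :=
    IntegrableOn.mono_set h.re Ioo_subset_Ioc_self
  refine h3.congr_fun (fun x hx => ?_) measurableSet_Ioo
  dsimp only
  rw [cpow_eq_ofReal hx.1.le (by linarith [hx.2]) v, Complex.ofReal_re]

lemma betaIntegral_real {u v : ℝ} (hu : 0 < u) (hv : 0 < v) :
    ∫ x in Ioo (0:ℝ) 1, x ^ (u - 1) * (1 - x) ^ (v - 1)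
      = Real.Gamma u * Real.Gamma v / Real.Gamma (u + v) := by
  have h := Complex.Gamma_mul_Gamma_eq_betaIntegral (s := (u : ℂ)) (t := (v : ℂ))
    (by simpa) (by simpa)
  have hbeta : Complex.betaIntegral u v
      = ((∫ x in Ioo (0:ℝ) 1, x ^ (u - 1) * (1 - x) ^ (v - 1) : ℝ) : ℂ) := by
    rw [Complex.betaIntegral, intervalIntegral.integral_of_le zero_le_one,
      ← MeasureTheory.Measure.restrict_congr_set Ioo_ae_eq_Ioc]
    calc ∫ x in Ioo (0:ℝ) 1, (x:ℂ) ^ ((u:ℂ) - 1) * (1 - (x:ℂ)) ^ ((v:ℂ) - 1)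
        = ∫ x in Ioo (0:ℝ) 1, ((x ^ (u - 1) * (1 - x) ^ (v - 1) : ℝ) : ℂ) :=
          setIntegral_congr_fun measurableSet_Ioo
            (fun x hx => cpow_eq_ofReal hx.1.le (by linarith [hx.2]) v)
      _ = ((∫ x in Ioo (0:ℝ) 1, x ^ (u - 1) * (1 - x) ^ (v - 1) : ℝ) : ℂ) := integral_ofReal
  rw [hbeta, ← Complex.ofReal_add, Complex.Gamma_ofReal, Complex.Gamma_ofReal,
    Complex.Gamma_ofReal, ← Complex.ofReal_mul, ← Complex.ofReal_mul] at h
  have h2 := Complex.ofReal_inj.mp h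
  have hG : Real.Gamma (u + v) ≠ 0 := (Real.Gamma_pos_of_pos (by linarith)).ne'
  field_simp
  linarith [h2]

noncomputable def Pch (u : ℝ) (n : ℕ) : ℝ := ∏ i ∈ Finset.range n, (u + (i:ℝ))

lemma Pch_pos {u : ℝ} (hu : 0 < u) (n : ℕ) : 0 < Pch u n :=
  Finset.prod_pos fun i _ => by positivity

lemma Gamma_add_nat {u : ℝ} (hu : 0 < u) (n : ℕ) :
    Real.Gamma (u + n) = Pch u n * Real.Gamma u := by
  induction n with
  | zero => simp [Pch]
  | succ n ih =>
    have h1 : u + ((n+1 : ℕ) : ℝ) = (u + n) + 1 := by push_cast; ring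
    rw [h1, Real.Gamma_add_one (by positivity), ih]
    simp only [Pch, Finset.prod_range_succ]
    ring

lemma prod_two_add (m : ℕ) : ∏ i ∈ Finset.range m, ((2:ℝ) + i) = (m+1).factorial := by
  induction m with
  | zero => simp
  | succ m ih =>
    rw [Finset.prod_range_succ, ih]
    have h : (m+1+1).factorial = (m+2) * (m+1).factorial := Nat.factorial_succ (m+1)
    rw [h]
    push_cast
    ring

lemma prod_one_add (m : ℕ) : ∏ i ∈ Finset.range m, ((1:ℝ) + i) = m.factorial := by
  induction m with
  | zero => simp
  | succ m ih =>
    rw [Finset.prod_range_succ, ih]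
    have h : (m+1).factorial = (m+1) * m.factorial := Nat.factorial_succ m
    rw [h]
    push_cast
    ring

lemma Pch_two (n : ℕ) : Pch 2 n = (n+1).factorial := prod_two_add n

lemma Pch_ratio_le {a : ℝ} (ha : 0 < a) (ha1 : a < 1) (n : ℕ) :
    Pch (1-a) n ≤ ((n:ℝ)+1) / a * Pch a n := by
  cases n with
  | zero =>
    simp only [Pch, Finset.range_zero, Finset.prod_empty, Nat.cast_zero, mul_one, zero_add]
    rw [le_div_iff₀ ha, one_mul]
    linarith
  | succ m =>
    have h1 : Pch (1-a) (m+1) = (∏ i ∈ Finset.range m, ((1-a) + ((i:ℝ)+1))) * (1-a) := by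
      rw [Pch, Finset.prod_range_succ']
      push_cast
      simp
    have h2 : Pch a (m+1) = (∏ i ∈ Finset.range m, (a + ((i:ℝ)+1))) * a := by
      rw [Pch, Finset.prod_range_succ']
      push_cast
      simp
    have hb1 : (∏ i ∈ Finset.range m, ((1-a) + ((i:ℝ)+1)))
        ≤ ∏ i ∈ Finset.range m, ((2:ℝ) + i) := by
      refine Finset.prod_le_prod (fun i _ => ?_) (fun i _ => ?_) <;>
        · have := (Nat.cast_nonneg i : (0:ℝ) ≤ i); linarith
    have hb2 : (∏ i ∈ Finset.range m, ((1:ℝ) + i))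
        ≤ ∏ i ∈ Finset.range m, (a + ((i:ℝ)+1)) := by
      refine Finset.prod_le_prod (fun i _ => ?_) (fun i _ => ?_) <;>
        · have := (Nat.cast_nonneg i : (0:ℝ) ≤ i); linarith
    rw [prod_two_add] at hb1
    rw [prod_one_add] at hb2
    have hf : ((m+1).factorial : ℝ) = ((m:ℝ)+1) * m.factorial := by
      rw [Nat.factorial_succ]; push_cast; ring
    have hrw : ((((m+1):ℕ):ℝ)+1) / a * ((∏ i ∈ Finset.range m, (a + ((i:ℝ)+1))) * a)
        = ((m:ℝ)+2) * ∏ i ∈ Finset.range m, (a + ((i:ℝ)+1)) := by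
      push_cast
      field_simp
      ring
    rw [h1, h2, hrw]
    calc (∏ i ∈ Finset.range m, ((1-a) + ((i:ℝ)+1))) * (1-a)
        ≤ ((m+1).factorial : ℝ) * 1 :=
          mul_le_mul hb1 (by linarith) (by linarith) (Nat.cast_nonneg _)
      _ = ((m:ℝ)+1) * m.factorial := by rw [hf]; ring
      _ ≤ ((m:ℝ)+2) * ∏ i ∈ Finset.range m, (a + ((i:ℝ)+1)) := by
          nlinarith [hb2, (Nat.cast_nonneg m : (0:ℝ) ≤ m),
            (Nat.cast_nonneg m.factorial : (0:ℝ) ≤ m.factorial)]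

lemma summable_sq {r : ℝ} (hr0 : 0 ≤ r) (hr : r < 1) :
    Summable (fun n : ℕ => ((n:ℝ)+1)^2 * r^n) := by
  have hn : ‖r‖ < 1 := by rw [Real.norm_eq_abs, abs_of_nonneg hr0]; exact hr
  have h2 := summable_pow_mul_geometric_of_norm_lt_one (R := ℝ) 2 hn
  have h1 := summable_pow_mul_geometric_of_norm_lt_one (R := ℝ) 1 hn
  have h0 := summable_geometric_of_norm_lt_one hn
  refine (h2.add ((h1.mul_left 2).add h0)).congr (fun n => ?_)
  simp only [pow_one, Pi.add_apply]
  ring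

lemma summable_linear {r : ℝ} (hr0 : 0 ≤ r) (hr : r < 1) :
    Summable (fun n : ℕ => ((n:ℝ)+1) * r^n) := by
  have hn : ‖r‖ < 1 := by rw [Real.norm_eq_abs, abs_of_nonneg hr0]; exact hr
  have h1 := summable_pow_mul_geometric_of_norm_lt_one (R := ℝ) 1 hn
  have h0 := summable_geometric_of_norm_lt_one hn
  refine (h1.add h0).congr (fun n => ?_)
  simp only [pow_one, Pi.add_apply]
  ring

lemma tsum_linear {t : ℝ} (ht0 : 0 ≤ t) (ht : t < 1) :
    ∑' n : ℕ, ((n:ℝ)+1) * t^n = 1 / (1-t)^2 := by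
  have hn : ‖t‖ < 1 := by rw [Real.norm_eq_abs, abs_of_nonneg ht0]; exact ht
  have h1 : ∑' n : ℕ, (n:ℝ) * t^n = t / (1-t)^2 :=
    tsum_coe_mul_geometric_of_norm_lt_one hn
  have h0 : ∑' n : ℕ, t^n = (1-t)⁻¹ := tsum_geometric_of_lt_one ht0 ht
  have hs1 : Summable (fun n : ℕ => (n:ℝ) * t^n) := by
    refine (summable_pow_mul_geometric_of_norm_lt_one (R := ℝ) 1 hn).congr (fun n => ?_)
    simp [pow_one]
  have hs0 := summable_geometric_of_norm_lt_one hn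
  have : ∑' n : ℕ, ((n:ℝ)+1) * t^n = (∑' n : ℕ, (n:ℝ) * t^n) + ∑' n : ℕ, t^n := by
    rw [← Summable.tsum_add hs1 hs0]
    congr 1
    funext n
    ring
  rw [this, h1, h0]
  have hne : (1-t) ≠ 0 := by intro h; rw [sub_eq_zero] at h; exact absurd h.symm (ne_of_lt ht)
  field_simp
  ring
lemma summable_main {a r : ℝ} (ha0 : 0 < a) (ha1 : a < 1) (hr0 : 0 ≤ r) (hr : r < 1) :
    Summable (fun n : ℕ => (Pch 2 n * Pch (1-a) n / Pch a n) * r^n / n.factorial) := by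
  refine Summable.of_nonneg_of_le (fun n => ?_) (fun n => ?_)
    ((summable_sq hr0 hr).mul_left (1/a))
  · have h1 := (Pch_pos (by norm_num : (0:ℝ) < 2) n).le
    have h2 := (Pch_pos (by linarith : (0:ℝ) < 1-a) n).le
    have h3 := (Pch_pos ha0 n).le
    have h4 : (0:ℝ) ≤ r^n := pow_nonneg hr0 n
    have h5 : (0:ℝ) ≤ (n.factorial : ℝ) := Nat.cast_nonneg _
    positivity
  · have hPa := Pch_pos ha0 n
    have hfac : (0:ℝ) < (n.factorial : ℝ) := Nat.cast_pos.mpr n.factorial_pos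
    have key : Pch 2 n * Pch (1-a) n / Pch a n / n.factorial ≤ 1/a * ((n:ℝ)+1)^2 := by
      rw [Pch_two]
      have hfact : ((n+1).factorial : ℝ) = ((n:ℝ)+1) * n.factorial := by
        rw [Nat.factorial_succ]; push_cast; ring
      rw [hfact]
      have h := Pch_ratio_le ha0 ha1 n
      rw [div_le_iff₀ hfac, div_le_iff₀ hPa]
      have hnn : (0:ℝ) ≤ ((n:ℝ)+1) * n.factorial := by positivity
      calc ((n:ℝ)+1) * n.factorial * Pch (1-a) n
          = ((n:ℝ)+1) * n.factorial * Pch (1-a) n := rfl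
        _ ≤ ((n:ℝ)+1) * n.factorial * (((n:ℝ)+1)/a * Pch a n) :=
            mul_le_mul_of_nonneg_left h hnn
        _ = 1/a * ((n:ℝ)+1)^2 * n.factorial * Pch a n := by ring
    calc (Pch 2 n * Pch (1-a) n / Pch a n) * r^n / n.factorial
        = (Pch 2 n * Pch (1-a) n / Pch a n / n.factorial) * r^n := by ring
      _ ≤ (1/a * ((n:ℝ)+1)^2) * r^n :=
          mul_le_mul_of_nonneg_right key (pow_nonneg hr0 n)
      _ = 1/a * (((n:ℝ)+1)^2 * r^n) := by ring

lemma betaLintegral {u v : ℝ} (hu : 0 < u) (hv : 0 < v) :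
    ∫⁻ x in Ioo (0:ℝ) 1, ENNReal.ofReal (x ^ (u-1) * (1-x)^(v-1))
      = ENNReal.ofReal (Real.Gamma u * Real.Gamma v / Real.Gamma (u+v)) := by
  rw [← betaIntegral_real hu hv,
    ← ofReal_integral_eq_lintegral_ofReal (betaIntegrableOn hu hv) ?_]
  filter_upwards [ae_restrict_mem measurableSet_Ioo] with x hx
  have hx0 : (0:ℝ) ≤ x := hx.1.le
  have hx1 : (0:ℝ) ≤ 1 - x := by linarith [hx.2]
  exact mul_nonneg (Real.rpow_nonneg hx0 _) (Real.rpow_nonneg hx1 _)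

lemma coeff_id {a q : ℝ} (ha0 : 0 < a) (ha1 : a < 1) (hq : 0 < q) (n : ℕ) :
    (1/Real.Gamma a) * (Pch 2 n * Pch (1-a) n / (Pch a n * n.factorial)) *
      (Real.Gamma (q+3-2*a) * Real.Gamma (a+(n:ℝ)) / Real.Gamma ((q+3-2*a)+(a+(n:ℝ))))
    = (Real.Gamma (q+3-2*a)/(Real.Gamma (1-a) * Real.Gamma (q+2))) *
        (((n:ℝ)+1) * (Real.Gamma ((1-a)+(n:ℝ)) * Real.Gamma (q+2)
          / Real.Gamma (((1-a)+(n:ℝ))+(q+2)))) := by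
  have e1 : (q+3-2*a)+(a+(n:ℝ)) = (q+3-a)+(n:ℝ) := by ring
  have e2 : ((1-a)+(n:ℝ))+(q+2) = (q+3-a)+(n:ℝ) := by ring
  rw [e1, e2, Gamma_add_nat (show (0:ℝ) < q+3-a by linarith) n, Gamma_add_nat ha0 n,
    Gamma_add_nat (show (0:ℝ) < 1-a by linarith) n, Pch_two]
  have hfact : ((n+1).factorial : ℝ) = ((n:ℝ)+1) * n.factorial := by
    rw [Nat.factorial_succ]; push_cast; ring
  rw [hfact]
  have hGa := Real.Gamma_pos_of_pos ha0
  have hG1a := Real.Gamma_pos_of_pos (show (0:ℝ) < 1-a by linarith)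
  have hGq2 := Real.Gamma_pos_of_pos (show (0:ℝ) < q+2 by linarith)
  have hGq3a := Real.Gamma_pos_of_pos (show (0:ℝ) < q+3-a by linarith)
  have hPa := Pch_pos ha0 n
  have hPq := Pch_pos (show (0:ℝ) < q+3-a by linarith) n
  have hfac : (0:ℝ) < (n.factorial : ℝ) := Nat.cast_pos.mpr n.factorial_pos
  field_simp

/-- The density `g_a` of the potential measure of the Ford-model tagged-fragment
subordinator has Mellin transform
`∫₀¹ x^{q-1} g_a(x) dx = Γ(q)Γ(q+3-2a)/(Γ(q+1-a)Γ(q+2))` for all `q > 0`, where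
`g_a(x) = Γ(a)⁻¹ x^{3-2a}(1-x)^{a-1} ∑ₙ ((2)ₙ(1-a)ₙ/(a)ₙ) (1-x)ⁿ/n!` with `(u)ₙ` the
Pochhammer symbol. -/
theorem stmt_14 (a : ℝ) (ha : a ∈ Set.Ioo (0 : ℝ) 1) (q : ℝ) (hq : 0 < q) :
    ∫ x in Set.Ioo (0 : ℝ) 1, x ^ (q - 1) *
        ((1 / Real.Gamma a) * x ^ (3 - 2 * a) * (1 - x) ^ (a - 1) *
          ∑' n : ℕ,
            ((∏ i ∈ Finset.range n, ((2 : ℝ) + i)) *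
              (∏ i ∈ Finset.range n, (1 - a + i)) /
              (∏ i ∈ Finset.range n, (a + i))) * (1 - x) ^ n / n.factorial)
      = Real.Gamma q * Real.Gamma (q + 3 - 2 * a)
        / (Real.Gamma (q + 1 - a) * Real.Gamma (q + 2)) := by
  obtain ⟨ha0, ha1⟩ := ha
  have h1a : (0:ℝ) < 1 - a := by linarith
  have hp0 : (0:ℝ) < q + 3 - 2*a := by linarith
  have hq2 : (0:ℝ) < q + 2 := by linarith
  have hGa : 0 < Real.Gamma a := Real.Gamma_pos_of_pos ha0
  set d : ℕ → ℝ :=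
    fun n => (1/Real.Gamma a) * (Pch 2 n * Pch (1-a) n / (Pch a n * n.factorial)) with hd
  have hd0 : ∀ n, 0 ≤ d n := by
    intro n
    have h1 := (Pch_pos (show (0:ℝ) < 2 by norm_num) n).le
    have h2 := (Pch_pos h1a n).le
    have h3 := (Pch_pos ha0 n).le
    have h5 : (0:ℝ) ≤ (n.factorial:ℝ) := Nat.cast_nonneg _
    simp only [hd]
    positivity
  set f : ℕ → ℝ → ℝ :=
    fun n x => d n * (x ^ ((q+3-2*a) - 1) * (1-x) ^ ((a+(n:ℝ)) - 1)) with hf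
  have hfm : ∀ n, Measurable (f n) := by
    intro n
    simp only [hf]
    fun_prop
  have hfnn : ∀ (n : ℕ), ∀ x ∈ Ioo (0:ℝ) 1, 0 ≤ f n x := by
    intro n x hx
    have hx0 : (0:ℝ) ≤ x := hx.1.le
    have hx1 : (0:ℝ) ≤ 1 - x := by linarith [hx.2]
    exact mul_nonneg (hd0 n)
      (mul_nonneg (Real.rpow_nonneg hx0 _) (Real.rpow_nonneg hx1 _))
  have hfsum : ∀ x ∈ Ioo (0:ℝ) 1, Summable (fun n => f n x) := by
    intro x hx
    have hx0 : (0:ℝ) < x := hx.1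
    have hx1 : (0:ℝ) < 1 - x := by linarith [hx.2]
    have hs := (summable_main ha0 ha1 hx1.le (by linarith [hx.1] : 1 - x < 1)).mul_left
      ((1/Real.Gamma a) * (x ^ ((q+3-2*a)-1) * (1-x) ^ (a-1)))
    refine hs.congr fun n => ?_
    simp only [hf, hd]
    rw [show ((1-x):ℝ) ^ ((a+(n:ℝ)) - 1) = (1-x)^(a-1) * (1-x)^n by
      rw [← Real.rpow_natCast (1-x) n, ← Real.rpow_add hx1]; congr 1; ring]
    ring
  have hpt : ∀ x ∈ Ioo (0:ℝ) 1,
      x ^ (q - 1) * ((1 / Real.Gamma a) * x ^ (3 - 2 * a) * (1 - x) ^ (a - 1) *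
        ∑' n : ℕ, ((∏ i ∈ Finset.range n, ((2 : ℝ) + i)) *
          (∏ i ∈ Finset.range n, (1 - a + i)) /
          (∏ i ∈ Finset.range n, (a + i))) * (1 - x) ^ n / n.factorial)
      = ∑' n, f n x := by
    intro x hx
    have hx0 : (0:ℝ) < x := hx.1
    have hx1 : (0:ℝ) < 1 - x := by linarith [hx.2]
    calc x ^ (q - 1) * ((1 / Real.Gamma a) * x ^ (3 - 2 * a) * (1 - x) ^ (a - 1) *
          ∑' n : ℕ, ((∏ i ∈ Finset.range n, ((2 : ℝ) + i)) *
            (∏ i ∈ Finset.range n, (1 - a + i)) /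
            (∏ i ∈ Finset.range n, (a + i))) * (1 - x) ^ n / n.factorial)
        = ∑' n : ℕ, x ^ (q - 1) * ((1 / Real.Gamma a) * x ^ (3 - 2 * a) * (1 - x) ^ (a - 1) *
            (((∏ i ∈ Finset.range n, ((2 : ℝ) + i)) *
              (∏ i ∈ Finset.range n, (1 - a + i)) /
              (∏ i ∈ Finset.range n, (a + i))) * (1 - x) ^ n / n.factorial)) := by
          rw [tsum_mul_left, tsum_mul_left]
      _ = ∑' n, f n x := by
          refine tsum_congr fun n => ?_
          simp only [hf, hd, Pch]
          rw [show (x:ℝ) ^ ((q+3-2*a) - 1) = x^(q-1) * x^(3-2*a) by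
            rw [← Real.rpow_add hx0]; congr 1; ring]
          rw [show ((1-x):ℝ) ^ ((a+(n:ℝ)) - 1) = (1-x)^(a-1) * (1-x)^n by
            rw [← Real.rpow_natCast (1-x) n, ← Real.rpow_add hx1]; congr 1; ring]
          ring
  have hFe_meas : Measurable (fun x => ∑' n, ENNReal.ofReal (f n x)) :=
    Measurable.ennreal_tsum fun n => (hfm n).ennreal_ofReal
  have hae1 : ∀ x ∈ Ioo (0:ℝ) 1,
      ENNReal.ofReal (∑' n, f n x) = ∑' n, ENNReal.ofReal (f n x) := fun x hx =>
    ENNReal.ofReal_tsum_of_nonneg (fun n => hfnn n x hx) (hfsum x hx)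
  have hFnn : ∀ x ∈ Ioo (0:ℝ) 1, 0 ≤ ∑' n, f n x := fun x hx =>
    tsum_nonneg (fun n => hfnn n x hx)
  have hv1 : ∀ n : ℕ, (0:ℝ) < a + n := fun n =>
    add_pos_of_pos_of_nonneg ha0 (Nat.cast_nonneg n)
  have hv2 : ∀ n : ℕ, (0:ℝ) < (1-a) + n := fun n =>
    add_pos_of_pos_of_nonneg h1a (Nat.cast_nonneg n)
  -- step B
  have hB : ∫ x in Ioo (0:ℝ) 1, (∑' n, f n x)
      = (∫⁻ x in Ioo (0:ℝ) 1, ∑' n, ENNReal.ofReal (f n x)).toReal := by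
    rw [integral_eq_lintegral_of_nonneg_ae ?_ ?_]
    · congr 1
      refine lintegral_congr_ae ?_
      filter_upwards [ae_restrict_mem measurableSet_Ioo] with x hx
      exact hae1 x hx
    · filter_upwards [ae_restrict_mem measurableSet_Ioo] with x hx using hFnn x hx
    · refine (hFe_meas.ennreal_toReal.aestronglyMeasurable).congr ?_
      filter_upwards [ae_restrict_mem measurableSet_Ioo] with x hx
      rw [← hae1 x hx, ENNReal.toReal_ofReal (hFnn x hx)]
  -- step C
  have hC : ∫⁻ x in Ioo (0:ℝ) 1, ∑' n, ENNReal.ofReal (f n x)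
      = ∑' n : ℕ, ENNReal.ofReal (d n * (Real.Gamma (q+3-2*a) * Real.Gamma (a+(n:ℝ))
          / Real.Gamma ((q+3-2*a)+(a+(n:ℝ))))) := by
    rw [lintegral_tsum (fun n => ((hfm n).ennreal_ofReal).aemeasurable)]
    refine tsum_congr fun n => ?_
    have hint : IntegrableOn (fun x : ℝ => f n x) (Ioo 0 1) := by
      simp only [hf]
      exact (betaIntegrableOn hp0 (hv1 n)).const_mul (d n)
    rw [← ofReal_integral_eq_lintegral_ofReal hint ?_]
    · congr 1
      simp only [hf]
      rw [integral_const_mul, betaIntegral_real hp0 (hv1 n)]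
    · filter_upwards [ae_restrict_mem measurableSet_Ioo] with x hx using hfnn n x hx
  -- step D/E
  have hKnn : 0 ≤ Real.Gamma (q+3-2*a)/(Real.Gamma (1-a) * Real.Gamma (q+2)) := by
    have := Real.Gamma_pos_of_pos hp0
    have := Real.Gamma_pos_of_pos h1a
    have := Real.Gamma_pos_of_pos hq2
    positivity
  have hD : (∑' n : ℕ, ENNReal.ofReal (d n * (Real.Gamma (q+3-2*a) * Real.Gamma (a+(n:ℝ))
        / Real.Gamma ((q+3-2*a)+(a+(n:ℝ))))))
      = ENNReal.ofReal (Real.Gamma (q+3-2*a)/(Real.Gamma (1-a) * Real.Gamma (q+2)))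
        * ∑' n : ℕ, ENNReal.ofReal (((n:ℝ)+1) * (Real.Gamma ((1-a)+(n:ℝ)) * Real.Gamma (q+2)
          / Real.Gamma (((1-a)+(n:ℝ))+(q+2)))) := by
    rw [← ENNReal.tsum_mul_left]
    refine tsum_congr fun n => ?_
    rw [← ENNReal.ofReal_mul hKnn]
    congr 1
    simp only [hd]
    exact coeff_id ha0 ha1 hq n
  -- steps F,G,H: the second series equals a single lintegral
  have hFGH : (∑' n : ℕ, ENNReal.ofReal (((n:ℝ)+1) * (Real.Gamma ((1-a)+(n:ℝ))
        * Real.Gamma (q+2) / Real.Gamma (((1-a)+(n:ℝ))+(q+2)))))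
      = ENNReal.ofReal (Real.Gamma (1-a) * Real.Gamma q / Real.Gamma ((1-a)+q)) := by
    have hFstep : ∀ n : ℕ, ENNReal.ofReal (((n:ℝ)+1) * (Real.Gamma ((1-a)+(n:ℝ))
          * Real.Gamma (q+2) / Real.Gamma (((1-a)+(n:ℝ))+(q+2))))
        = ∫⁻ t in Ioo (0:ℝ) 1, ENNReal.ofReal (((n:ℝ)+1)
            * (t ^ (((1-a)+(n:ℝ)) - 1) * (1-t) ^ ((q+2) - 1))) := by
      intro n
      rw [← betaIntegral_real (hv2 n) hq2, ← integral_const_mul]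
      rw [ofReal_integral_eq_lintegral_ofReal ((betaIntegrableOn (hv2 n) hq2).const_mul _) ?_]
      filter_upwards [ae_restrict_mem measurableSet_Ioo] with t ht
      have ht0 : (0:ℝ) ≤ t := ht.1.le
      have ht1 : (0:ℝ) ≤ 1 - t := by linarith [ht.2]
      have h1 : (0:ℝ) ≤ ((n:ℝ)+1) := by positivity
      exact mul_nonneg h1 (mul_nonneg (Real.rpow_nonneg ht0 _) (Real.rpow_nonneg ht1 _))
    calc (∑' n : ℕ, ENNReal.ofReal (((n:ℝ)+1) * (Real.Gamma ((1-a)+(n:ℝ))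
          * Real.Gamma (q+2) / Real.Gamma (((1-a)+(n:ℝ))+(q+2)))))
        = ∑' n : ℕ, ∫⁻ t in Ioo (0:ℝ) 1, ENNReal.ofReal (((n:ℝ)+1)
            * (t ^ (((1-a)+(n:ℝ)) - 1) * (1-t) ^ ((q+2) - 1))) := tsum_congr hFstep
      _ = ∫⁻ t in Ioo (0:ℝ) 1, ∑' n : ℕ, ENNReal.ofReal (((n:ℝ)+1)
            * (t ^ (((1-a)+(n:ℝ)) - 1) * (1-t) ^ ((q+2) - 1))) := by
          refine (lintegral_tsum (fun n => ?_)).symm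
          exact (Measurable.ennreal_ofReal (by fun_prop)).aemeasurable
      _ = ∫⁻ t in Ioo (0:ℝ) 1, ENNReal.ofReal (t ^ ((1-a) - 1) * (1-t) ^ (q - 1)) := by
          refine lintegral_congr_ae ?_
          filter_upwards [ae_restrict_mem measurableSet_Ioo] with t ht
          have ht0 : (0:ℝ) < t := ht.1
          have ht2 : t < 1 := ht.2
          have ht1 : (0:ℝ) < 1 - t := by linarith
          have hterm : ∀ n : ℕ, ((n:ℝ)+1) * (t ^ (((1-a)+(n:ℝ)) - 1) * (1-t) ^ ((q+2) - 1))
              = (t ^ ((1-a) - 1) * (1-t) ^ ((q+2) - 1)) * (((n:ℝ)+1) * t^n) := by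
            intro n
            rw [show (t:ℝ) ^ (((1-a)+(n:ℝ)) - 1) = t^((1-a)-1) * t^n by
              rw [← Real.rpow_natCast t n, ← Real.rpow_add ht0]; congr 1; ring]
            ring
          have hnn : ∀ n : ℕ, 0 ≤ (t ^ ((1-a) - 1) * (1-t) ^ ((q+2) - 1)) * (((n:ℝ)+1) * t^n) := by
            intro n
            have h1 : (0:ℝ) ≤ ((n:ℝ)+1) := by positivity
            exact mul_nonneg (mul_nonneg (Real.rpow_nonneg ht0.le _) (Real.rpow_nonneg ht1.le _))
              (mul_nonneg h1 (pow_nonneg ht0.le n))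
          calc ∑' n : ℕ, ENNReal.ofReal (((n:ℝ)+1) * (t ^ (((1-a)+(n:ℝ)) - 1)
                * (1-t) ^ ((q+2) - 1)))
              = ∑' n : ℕ, ENNReal.ofReal ((t ^ ((1-a) - 1) * (1-t) ^ ((q+2) - 1))
                  * (((n:ℝ)+1) * t^n)) := by
                refine tsum_congr fun n => ?_
                rw [hterm n]
            _ = ENNReal.ofReal (∑' n : ℕ, (t ^ ((1-a) - 1) * (1-t) ^ ((q+2) - 1))
                  * (((n:ℝ)+1) * t^n)) :=
                (ENNReal.ofReal_tsum_of_nonneg hnn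
                  ((summable_linear ht0.le ht2).mul_left _)).symm
            _ = ENNReal.ofReal (t ^ ((1-a) - 1) * (1-t) ^ (q - 1)) := by
                rw [tsum_mul_left, tsum_linear ht0.le ht2]
                congr 1
                have hsplit : ((1-t):ℝ) ^ ((q+2) - 1) = (1-t)^(q-1) * (1-t)^(2:ℕ) := by
                  rw [← Real.rpow_natCast (1-t) 2, ← Real.rpow_add ht1]
                  congr 1
                  push_cast
                  ring
                rw [hsplit]
                have h2 : ((1-t):ℝ)^(2:ℕ) ≠ 0 := pow_ne_zero 2 (ne_of_gt ht1)
                field_simp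
      _ = ENNReal.ofReal (Real.Gamma (1-a) * Real.Gamma q / Real.Gamma ((1-a)+q)) :=
          betaLintegral h1a hq
  -- assemble
  have hGq := Real.Gamma_pos_of_pos hq
  have hG1a := Real.Gamma_pos_of_pos h1a
  have hGq2 := Real.Gamma_pos_of_pos hq2
  have hGq1a := Real.Gamma_pos_of_pos (show (0:ℝ) < q + 1 - a by linarith)
  calc ∫ x in Set.Ioo (0 : ℝ) 1, x ^ (q - 1) *
        ((1 / Real.Gamma a) * x ^ (3 - 2 * a) * (1 - x) ^ (a - 1) *
          ∑' n : ℕ,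
            ((∏ i ∈ Finset.range n, ((2 : ℝ) + i)) *
              (∏ i ∈ Finset.range n, (1 - a + i)) /
              (∏ i ∈ Finset.range n, (a + i))) * (1 - x) ^ n / n.factorial)
      = ∫ x in Ioo (0:ℝ) 1, (∑' n, f n x) :=
        setIntegral_congr_fun measurableSet_Ioo (fun x hx => hpt x hx)
    _ = (∫⁻ x in Ioo (0:ℝ) 1, ∑' n, ENNReal.ofReal (f n x)).toReal := hB
    _ = (ENNReal.ofReal (Real.Gamma (q+3-2*a)/(Real.Gamma (1-a) * Real.Gamma (q+2)))
          * ENNReal.ofReal (Real.Gamma (1-a) * Real.Gamma q / Real.Gamma ((1-a)+q))).toReal := by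
        rw [hC, hD, hFGH]
    _ = Real.Gamma q * Real.Gamma (q + 3 - 2 * a)
        / (Real.Gamma (q + 1 - a) * Real.Gamma (q + 2)) := by
        rw [← ENNReal.ofReal_mul hKnn, ENNReal.toReal_ofReal ?_]
        · rw [show (1-a)+q = q+1-a by ring]
          field_simp
        · have h3 : 0 ≤ Real.Gamma (1-a) * Real.Gamma q / Real.Gamma ((1-a)+q) := by
            have := Real.Gamma_pos_of_pos (show (0:ℝ) < (1-a)+q by linarith)
            positivity
          exact mul_nonneg hKnn h3
end
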